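/- arXiv:2103.14946 — 10 statements merged into one kernel-verified Lean document; each statement's English description precedes it below -/
import Mathlib

section
/- For every relation R ⊆ 𝒫(V) × V satisfying Reflexivity, Transitivity and Monotonicity, there exists a dependence model M = (O, I, A) with A nonempty whose global dependence relation coincides with R: for all X ⊆ V and y ∈ V, D^M_X y holds iff R_X y. Moreover, if V is finite, then M can be taken finite, with the set A of admissible assignments of cardinality at most 2^|V|. -/
/-- The local dependence relation at assignment `s` in a dependence model with
admissible assignments `A` (the interpretation of predicate symbols is irrelevant here). -/
def localDep {V O : Type} (A : Set (V → O)) (s : V → O) (X : Set V) (y : V) : Prop :=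
  ∀ t ∈ A, (∀ x ∈ X, s x = t x) → s y = t y

/-- The global dependence relation of the model: `D^M_X y` iff `D^s_X y` for all `s ∈ A`. -/
def globalDep {V O : Type} (A : Set (V → O)) (X : Set V) (y : V) : Prop :=
  ∀ s ∈ A, localDep A s X y

/-- `R` satisfies Reflexivity: `R_{{x}} x` for all `x ∈ V`. -/
def RelReflexive {V : Type} (R : Set V → V → Prop) : Prop :=
  ∀ x : V, R {x} x

/-- `R` satisfies Transitivity: `R_X Y` and `R_Y Z` imply `R_X Z`. -/
def RelTransitive {V : Type} (R : Set V → V → Prop) : Prop :=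
  ∀ X Y Z : Set V, (∀ y ∈ Y, R X y) → (∀ z ∈ Z, R Y z) → ∀ z ∈ Z, R X z

/-- `R` satisfies Monotonicity: `R_X y` and `X ⊆ Z` imply `R_Z y`. -/
def RelMonotone {V : Type} (R : Set V → V → Prop) : Prop :=
  ∀ (X Z : Set V) (y : V), R X y → X ⊆ Z → R Z y

theorem stmt2' {V : Type} (R : Set V → V → Prop)
    (hR : ∀ x : V, R {x} x)
    (hT : ∀ X Y Z : Set V, (∀ y ∈ Y, R X y) → (∀ z ∈ Z, R Y z) → ∀ z ∈ Z, R X z)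
    (hM : ∀ (X Z : Set V) (y : V), R X y → X ⊆ Z → R Z y) :
    ∃ (O : Type) (A : Set (V → O)), A.Nonempty ∧
      (∀ (X : Set V) (y : V), globalDep A X y ↔ R X y) ∧
      (Finite V → Finite O ∧ A.ncard ≤ 2 ^ Nat.card V) := by
  classical
  set f : Set V → (V → Option (Set V)) := fun C x => if x ∈ C then none else some C with hf
  set Cl : Set (Set V) := {C | ∀ y, R C y → y ∈ C} with hCl
  refine ⟨Option (Set V), f '' Cl, ?_, ?_, ?_⟩
  · exact ⟨f Set.univ, Set.univ, fun y _ => trivial, rfl⟩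
  · have hXcl : ∀ X : Set V, ∀ x ∈ X, R X x := fun X x hx => hM {x} X x (hR x) (by simpa using hx)
    have hclosed : ∀ X : Set V, {y | R X y} ∈ Cl := by
      intro X z hz
      exact hT X {y | R X y} {z} (fun y hy => hy)
        (fun z' hz' => by simpa [Set.mem_singleton_iff.mp hz'] using hz) z rfl
    have hsub : ∀ X C : Set V, C ∈ Cl → X ⊆ C → ∀ y, R X y → y ∈ C := by
      intro X C hC hXC y hy
      exact hC y (hM X C y hy hXC)
    intro X y
    constructor
    · intro hG
      have h1 := hG (f {y' | R X y'}) ⟨_, hclosed X, rfl⟩ (f Set.univ)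
        ⟨Set.univ, fun y _ => trivial, rfl⟩ ?_
      · by_contra hy
        simp only [hf, Set.mem_univ, if_true, Set.mem_setOf_eq, hy, if_false] at h1
        cases h1
      · intro x hx
        simp only [hf, Set.mem_univ, if_true, Set.mem_setOf_eq, hXcl X x hx]
    · rintro hXy s ⟨C, hC, rfl⟩ t ⟨D, hD, rfl⟩ hagree
      by_cases hXC : X ⊆ C
      · by_cases hXD : X ⊆ D
        · have h1 : y ∈ C := hsub X C hC hXC y hXy
          have h2 : y ∈ D := hsub X D hD hXD y hXy
          simp [hf, h1, h2]
        · obtain ⟨x, hxX, hxD⟩ := Set.not_subset.mp hXD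
          have := hagree x hxX
          simp only [hf, hxX, hXC hxX, if_true, hxD, if_false] at this
          cases this
      · obtain ⟨x, hxX, hxC⟩ := Set.not_subset.mp hXC
        have h := hagree x hxX
        simp only [hf, hxC, if_false] at h
        by_cases hxD : x ∈ D
        · simp [hxD] at h
        · simp only [hxD, if_false, Option.some.injEq] at h
          subst h
          rfl
  · intro hV
    haveI : Fintype V := Fintype.ofFinite V
    refine ⟨inferInstance, ?_⟩
    calc (f '' Cl).ncard ≤ Cl.ncard := Set.ncard_image_le (Set.toFinite Cl)
      _ ≤ (Set.univ : Set (Set V)).ncard := Set.ncard_le_ncard (Set.subset_univ _) (Set.toFinite _)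
      _ = Nat.card (Set V) := Set.ncard_univ _
      _ = 2 ^ Nat.card V := by
          haveI : Fintype V := Fintype.ofFinite V
          simp [Nat.card_eq_fintype_card]


/-- Every relation `R ⊆ 𝒫(V) × V` satisfying Reflexivity, Transitivity and Monotonicity
is the global dependence relation of some dependence model with a nonempty set of
admissible assignments; moreover, if `V` is finite, the model can be taken finite with
at most `2^|V|` admissible assignments. -/
theorem stmt2 {V : Type} (R : Set V → V → Prop)
    (hR : RelReflexive R) (hT : RelTransitive R) (hM : RelMonotone R) :
    ∃ (O : Type) (A : Set (V → O)), A.Nonempty ∧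
      (∀ (X : Set V) (y : V), globalDep A X y ↔ R X y) ∧
      (Finite V → Finite O ∧ A.ncard ≤ 2 ^ Nat.card V) := by
  exact stmt2' R hR hT hM
end

section
/- For every relation R ⊆ 𝒫(V) × V satisfying Reflexivity, Transitivity and Monotonicity, there exists a dependence model M = (O, I, A) with A nonempty in which R coincides with the local dependence relation at every assignment: for all s ∈ A, X ⊆ V and y ∈ V, D^s_X y holds iff R_X y (hence R also coincides with the global dependence relation D^M). Moreover, if V is finite, then M can be taken finite, with the set A of admissible assignments of cardinality at most 2^(2^|V|). -/
/-- Every relation `R ⊆ 𝒫(V) × V` satisfying Reflexivity, Transitivity and Monotonicity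
coincides with the local dependence relation at every assignment of some dependence model
with a nonempty set of admissible assignments (hence also with its global dependence
relation); moreover, if `V` is finite, the model can be taken finite with at most
`2^(2^|V|)` admissible assignments. -/
theorem stmt3 {V : Type} (R : Set V → V → Prop)
    (hR : RelReflexive R) (hT : RelTransitive R) (hM : RelMonotone R) :
    ∃ (O : Type) (A : Set (V → O)), A.Nonempty ∧
      (∀ s ∈ A, ∀ (X : Set V) (y : V), localDep A s X y ↔ R X y) ∧
      (∀ (X : Set V) (y : V), globalDep A X y ↔ R X y) ∧
      (Finite V → Finite O ∧ A.ncard ≤ 2 ^ 2 ^ Nat.card V) := by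
  classical
  set cl : Set V → Set V := fun X => {y | R X y} with hcl
  have hsub : ∀ X : Set V, X ⊆ cl X := by
    intro X x hx
    exact hM {x} X x (hR x) (by simpa using hx)
  have hmono : ∀ X Z : Set V, X ⊆ Z → cl X ⊆ cl Z := by
    intro X Z h y hy
    exact hM X Z y hy h
  have hidem : ∀ X : Set V, cl (cl X) ⊆ cl X := by
    intro X y hy
    exact hT X (cl X) {y} (fun z hz => hz) (fun z hz => by rwa [Set.mem_singleton_iff.mp hz])
      y rfl
  set s : (Set V → Prop) → V → (Set V → Prop) :=
    fun f v X₀ => f X₀ ∧ v ∉ cl X₀ with hs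
  set A : Set (V → (Set V → Prop)) := Set.range s with hA
  have key : ∀ (f : Set V → Prop) (X : Set V) (y : V), localDep A (s f) X y ↔ R X y := by
    intro f X y
    constructor
    · intro h
      by_contra hRxy
      have hyX : y ∉ cl X := hRxy
      set g : Set V → Prop := fun Z => if Z = X then ¬ f X else f Z with hg
      have hagr : ∀ x ∈ X, s f x = s g x := by
        intro x hx
        funext X₀
        by_cases hZ : X₀ = X
        · subst hZ
          have hxc : x ∈ cl X₀ := hsub X₀ hx
          simp [hs, hg, hxc]
        · simp [hs, hg, hZ]
      have h0 := h (s g) ⟨g, rfl⟩ hagr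
      have h0' := congrFun h0 X
      simp only [hs, hg, if_pos rfl] at h0'
      have h1 : (f X ∧ y ∉ cl X) ↔ ((if True then ¬ f X else f X) ∧ y ∉ cl X) := by rw [h0']
      simp [hyX] at h1
    · intro h t ht hagr
      obtain ⟨g, rfl⟩ := ht
      funext X₀
      by_cases hy0 : y ∈ cl X₀
      · simp [hs, hy0]
      · have hXns : ¬ X ⊆ cl X₀ := by
          intro hXs
          exact hy0 (hidem X₀ (hmono X (cl X₀) hXs h))
        obtain ⟨x, hx, hx0⟩ := Set.not_subset.mp hXns
        have he := congrFun (hagr x hx) X₀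
        simp only [hs] at he ⊢
        have h2 : (f X₀ ∧ x ∉ cl X₀) ↔ (g X₀ ∧ x ∉ cl X₀) := by rw [he]
        simp only [hx0, not_false_iff, and_true] at h2
        simp [hy0, h2]
  refine ⟨Set V → Prop, A, ⟨s (fun _ => False), ⟨_, rfl⟩⟩, ?_, ?_, ?_⟩
  · rintro t ⟨f, rfl⟩ X y
    exact key f X y
  · intro X y
    constructor
    · intro hg
      exact (key (fun _ => False) X y).mp (hg _ ⟨_, rfl⟩)
    · rintro h t ⟨f, rfl⟩
      exact (key f X y).mpr h
  · intro hV
    haveI : Finite V := hV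
    refine ⟨by infer_instance, ?_⟩
    have h1 : A.ncard = Nat.card A := rfl
    have h2 : Nat.card A ≤ Nat.card (Set V → Prop) := Finite.card_range_le s
    have h3 : Nat.card (Set V → Prop) = 2 ^ 2 ^ Nat.card V := by
      haveI := Fintype.ofFinite V
      rw [Nat.card_eq_fintype_card, Nat.card_eq_fintype_card]
      rw [Fintype.card_fun, Fintype.card_prop, Fintype.card_set]
    omega
end

section
/- Let 𝓡 ⊆ 𝒫(𝒫(V) × V) be a family of relations, each satisfying Reflexivity, Transitivity and Monotonicity, such that all relations in 𝓡 agree on constants (i.e., for all y ∈ V and R, R' ∈ 𝓡: R_∅ y holds iff R'_∅ y holds). Then there exists a dependence model M = (O, I, A) such that 𝓡 coincides with the family {D^s : s ∈ A} of all local dependence relations of M. Moreover, if V is finite, then M can be taken to be finite. -/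
namespace Stmt4Aux

variable {V : Type}

/-- `C` is closed for `R`. -/
def RClosed (R : Set V → V → Prop) (C : Set V) : Prop :=
  ∀ Y z, R Y z → Y ⊆ C → z ∈ C

/-- Object domain. -/
abbrev Obj (V : Type) : Type := Option ((Set V → V → Prop) × Set (Set V))

open Classical in
/-- The assignment associated to a relation `R` and a set `S` of subsets of `V`. -/
noncomputable def fAsg (R : Set V → V → Prop) (S : Set (Set V)) (v : V) : Obj V :=
  if R ∅ v then none else some (R, {C | C ∈ S ∧ RClosed R C ∧ v ∉ C})

/-- The set of admissible assignments. -/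
def Adm (𝓡 : Set (Set V → V → Prop)) : Set (V → Obj V) :=
  {g | ∃ R ∈ 𝓡, ∃ S : Set (Set V), g = fAsg R S}

lemma clClosed {R : Set V → V → Prop} (hT : RelTransitive R) (X : Set V) :
    RClosed R {y | R X y} := by
  intro Y z hYz hY
  exact hT X Y {z} (fun y hy => hY hy) (fun z' hz' => by rw [hz']; exact hYz) z rfl

lemma agClosed {𝓡 : Set (Set V → V → Prop)}
    (h : ∀ R ∈ 𝓡, RelReflexive R ∧ RelTransitive R ∧ RelMonotone R)
    (hagree : ∀ (y : V), ∀ R ∈ 𝓡, ∀ R' ∈ 𝓡, (R ∅ y ↔ R' ∅ y))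
    {R R' : Set V → V → Prop} (hR : R ∈ 𝓡) (hR' : R' ∈ 𝓡) (S T : Set (Set V)) :
    RClosed R {v | fAsg R S v = fAsg R' T v} := by
  classical
  intro Y z hYz hY
  by_cases hRR : R = R'
  · subst hRR
    show fAsg R S z = fAsg R T z
    unfold fAsg
    by_cases hz : R ∅ z
    · simp [hz]
    · simp only [if_neg hz]
      -- key : any closed C with z ∉ C in the symmetric difference gives a contradiction
      have key : ∀ C : Set V, RClosed R C →
          ((C ∈ S ∧ C ∉ T) ∨ (C ∈ T ∧ C ∉ S)) → z ∈ C := by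
        intro C hCcl hCd
        apply hCcl Y z hYz
        intro v hv
        have hvag : fAsg R S v = fAsg R T v := hY hv
        by_cases hv0 : R ∅ v
        · exact hCcl ∅ v hv0 (Set.empty_subset C)
        · simp only [fAsg, if_neg hv0, Option.some.injEq, Prod.mk.injEq, true_and] at hvag
          by_contra hvC
          have h1 : C ∈ {C | C ∈ S ∧ RClosed R C ∧ v ∉ C} ↔
              C ∈ {C | C ∈ T ∧ RClosed R C ∧ v ∉ C} := by rw [hvag]
          simp only [Set.mem_setOf_eq] at h1
          rcases hCd with ⟨hS, hT⟩ | ⟨hT, hS⟩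
          · exact hT (h1.mp ⟨hS, hCcl, hvC⟩).1
          · exact hS (h1.mpr ⟨hT, hCcl, hvC⟩).1
      congr 1
      ext C
      simp only [Set.mem_setOf_eq]
      constructor
      · rintro ⟨hCS, hCcl, hzC⟩
        refine ⟨?_, hCcl, hzC⟩
        by_contra hCT
        exact hzC (key C hCcl (Or.inl ⟨hCS, hCT⟩))
      · rintro ⟨hCT, hCcl, hzC⟩
        refine ⟨?_, hCcl, hzC⟩
        by_contra hCS
        exact hzC (key C hCcl (Or.inr ⟨hCT, hCS⟩))
  · -- different relations: agreement set is exactly the constants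
    have hYK : Y ⊆ {v | R ∅ v} := by
      intro v hv
      have hvag : fAsg R S v = fAsg R' T v := hY hv
      by_contra hv0
      rw [Set.mem_setOf_eq] at hv0
      simp only [fAsg, if_neg hv0] at hvag
      by_cases hv0' : R' ∅ v
      · rw [if_pos hv0'] at hvag; exact Option.some_ne_none _ hvag
      · rw [if_neg hv0'] at hvag
        rw [Option.some.injEq, Prod.mk.injEq] at hvag
        exact hRR hvag.1
    have hz : R ∅ z := clClosed (h R hR).2.1 ∅ Y z hYz hYK
    have hz' : R' ∅ z := (hagree z R hR R' hR').mp hz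
    show fAsg R S z = fAsg R' T z
    simp [fAsg, hz, hz']

lemma localDep_fAsg {𝓡 : Set (Set V → V → Prop)}
    (h : ∀ R ∈ 𝓡, RelReflexive R ∧ RelTransitive R ∧ RelMonotone R)
    (hagree : ∀ (y : V), ∀ R ∈ 𝓡, ∀ R' ∈ 𝓡, (R ∅ y ↔ R' ∅ y))
    {R : Set V → V → Prop} (hR : R ∈ 𝓡) (S : Set (Set V)) :
    localDep (Adm 𝓡) (fAsg R S) = R := by
  classical
  obtain ⟨hRefl, hTrans, hMono⟩ := h R hR
  funext X y
  apply propext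
  constructor
  · -- local dependence implies R, via the witness assignment fAsg R T
    intro hld
    set clX : Set V := {z | R X z} with hclX
    have hclXcl : RClosed R clX := clClosed hTrans X
    set T : Set (Set V) := {C | ¬(C ∈ S ↔ C = clX)} with hT
    have htA : fAsg R T ∈ Adm 𝓡 := ⟨R, hR, T, rfl⟩
    have hagX : ∀ x ∈ X, fAsg R S x = fAsg R T x := by
      intro x hx
      have hXx : R X x := hMono {x} X x (hRefl x) (Set.singleton_subset_iff.mpr hx)
      by_cases hx0 : R ∅ x
      · simp [fAsg, hx0]
      · simp only [fAsg, if_neg hx0, Option.some.injEq, Prod.mk.injEq, true_and]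
        ext C
        simp only [Set.mem_setOf_eq]
        by_cases hC : C = clX
        · subst hC
          constructor
          · rintro ⟨_, _, hxC⟩; exact absurd hXx hxC
          · rintro ⟨_, _, hxC⟩; exact absurd hXx hxC
        · have hCT : C ∈ T ↔ C ∈ S := by
            simp only [hT, Set.mem_setOf_eq, hC, iff_false, not_not]
          rw [hCT]
    have hy := hld (fAsg R T) htA hagX
    by_cases hy0 : R ∅ y
    · exact hMono ∅ X y hy0 (Set.empty_subset X)
    · simp only [fAsg, if_neg hy0, Option.some.injEq, Prod.mk.injEq, true_and] at hy
      by_contra hXy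
      have h1 : clX ∈ {C | C ∈ S ∧ RClosed R C ∧ y ∉ C} ↔
          clX ∈ {C | C ∈ T ∧ RClosed R C ∧ y ∉ C} := by rw [hy]
      simp only [Set.mem_setOf_eq] at h1
      have hyc : y ∉ clX := hXy
      have hTc : clX ∈ T ↔ clX ∉ S := by
        simp [hT]
      by_cases hSc : clX ∈ S
      · exact (hTc.mp (h1.mp ⟨hSc, hclXcl, hyc⟩).1) hSc
      · exact hSc (h1.mpr ⟨hTc.mpr hSc, hclXcl, hyc⟩).1
  · -- R implies local dependence: all agreement sets are R-closed
    intro hXy t ht hagX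
    obtain ⟨R', hR', T, rfl⟩ := ht
    exact agClosed h hagree hR hR' S T X y hXy hagX

end Stmt4Aux

/-- Let `𝓡` be a family of relations on `𝒫(V) × V`, each satisfying Reflexivity,
Transitivity and Monotonicity, all agreeing on constants (`R_∅ y` iff `R'_∅ y`).
Then `𝓡` coincides with the family of all local dependence relations of some dependence
model; moreover, if `V` is finite, the model can be taken finite. -/
theorem stmt4 {V : Type} (𝓡 : Set (Set V → V → Prop))
    (h : ∀ R ∈ 𝓡, RelReflexive R ∧ RelTransitive R ∧ RelMonotone R)
    (hagree : ∀ (y : V), ∀ R ∈ 𝓡, ∀ R' ∈ 𝓡, (R ∅ y ↔ R' ∅ y)) :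
    ∃ (O : Type) (A : Set (V → O)),
      𝓡 = {D | ∃ s ∈ A, D = localDep A s} ∧
      (Finite V → Finite O) := by
  classical
  refine ⟨Stmt4Aux.Obj V, Stmt4Aux.Adm 𝓡, ?_, ?_⟩
  · ext D
    constructor
    · intro hD
      exact ⟨Stmt4Aux.fAsg D ∅, ⟨D, hD, ∅, rfl⟩,
        (Stmt4Aux.localDep_fAsg h hagree hD ∅).symm⟩
    · rintro ⟨s, ⟨R, hR, S, rfl⟩, hDeq⟩
      rw [Stmt4Aux.localDep_fAsg h hagree hR S] at hDeq
      rw [hDeq]; exact hR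
  · intro hV
    haveI := hV
    exact Finite.of_equiv _ (Equiv.optionEquivSumPUnit.{0,0} _).symm
end

section
/- (First-order translation) Fix a finite set of variables V = {v₁,…,v_n}. There is a first-order language L whose relation symbols are the symbols of Pred (with their arities) together with one fresh n-ary relation symbol A, and a map tr from LFD formulas over V to first-order L-formulas with free variables among V, such that: (i) the free variables of tr(φ) are exactly Free(φ); and (ii) for every dependence model M = (O, I, A₀) and every s ∈ A₀, M, s ⊨ φ iff tr(φ) is true in the L-structure T(M) under the variable assignment s, where T(M) has universe O, interprets each P ∈ Pred by I(P), and interprets A by {(s(v₁),…,s(v_n)) : s ∈ A₀}. -/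
namespace LFD

/-- LFD formulas over variables `V` and a relational vocabulary `Pred` with arity map `ar`:
atoms `P x₁…x_n`, negation, conjunction, dependence modalities `𝔻_X φ`,
and dependence atoms `D_X y` (with `X ⊆ V` finite). -/
inductive Formula (V Pred : Type) (ar : Pred → ℕ) : Type where
  | atom (P : Pred) (x : Fin (ar P) → V)
  | neg (φ : Formula V Pred ar)
  | conj (φ ψ : Formula V Pred ar)
  | dd (X : Finset V) (φ : Formula V Pred ar)
  | dep (X : Finset V) (y : V)

variable {V Pred O : Type} {ar : Pred → ℕ}

/-- The free variables of an LFD formula. -/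
def Free [DecidableEq V] : Formula V Pred ar → Finset V
  | .atom _ x => Finset.univ.image x
  | .neg φ => Free φ
  | .conj φ ψ => Free φ ∪ Free ψ
  | .dd X _ => X
  | .dep X _ => X

/-- A dependence model: an interpretation `I` of each predicate symbol as a set of
tuples of objects, together with a set `A` of admissible assignments. -/
structure DepModel (V Pred : Type) (ar : Pred → ℕ) (O : Type) where
  I : (P : Pred) → Set (Fin (ar P) → O)
  A : Set (V → O)

/-- `s =_X t` : the assignments `s` and `t` agree on all variables in `X`. -/
def agree (X : Set V) (s t : V → O) : Prop := ∀ x ∈ X, s x = t x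

/-- Truth of an LFD formula at an assignment in a dependence model. -/
def Sat (M : DepModel V Pred ar O) : Formula V Pred ar → (V → O) → Prop
  | .atom P x, s => (fun i => s (x i)) ∈ M.I P
  | .neg φ, s => ¬ Sat M φ s
  | .conj φ ψ, s => Sat M φ s ∧ Sat M ψ s
  | .dd X φ, s => ∀ t ∈ M.A, agree (↑X) s t → Sat M φ t
  | .dep X y, s => ∀ t ∈ M.A, agree (↑X) s t → s y = t y

end LFD

namespace LFD

/-- The first-order language whose relation symbols are those of `Pred` (with their
arities) together with one fresh `n`-ary relation symbol `A`. -/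
def Lang (Pred : Type) (ar : Pred → ℕ) (n : ℕ) : FirstOrder.Language where
  Functions := fun _ => Empty
  Relations := fun m => ({P : Pred // ar P = m}) ⊕ (PLift (m = n))

/-- The `L`-structure `T(M)` associated to a dependence model `M` over the variables
`V = Fin n`: universe `O`, each `P ∈ Pred` interpreted by `I(P)`, and the fresh symbol
`A` interpreted by `{(s(v₁),…,s(v_n)) : s ∈ A₀}`. -/
def TStr {Pred : Type} {ar : Pred → ℕ} {n : ℕ} {O : Type}
    (M : DepModel (Fin n) Pred ar O) : (Lang Pred ar n).Structure O where
  funMap := fun f _ => f.elim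
  RelMap := fun {m} r v =>
    match r with
    | Sum.inl P => (fun i => v (Fin.cast P.2 i)) ∈ M.I P.1
    | Sum.inr h => ∃ s ∈ M.A, ∀ i : Fin n, v (Fin.cast h.down.symm i) = s i

open FirstOrder Language

open FirstOrder Language Fin

section Aux
variable {L : FirstOrder.Language} {α β : Type*} {M : Type*}

theorem biUnion_empty'' {γ : Type*} [DecidableEq β] (s : Finset γ) :
    s.biUnion (fun _ => (∅ : Finset β)) = ∅ := by ext a; simp

theorem varFinsetLeft_relabel_right [DecidableEq β] {m : ℕ}
    {γ : Type*} (g : γ → β ⊕ Fin m) (hg : ∀ x, ∃ i, g x = Sum.inr i) (t : L.Term γ) :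
    (t.relabel g).varFinsetLeft = ∅ := by
  induction t with
  | var x => obtain ⟨i, hi⟩ := hg x; simp [Term.relabel, hi]
  | func f ts ih => simp [Term.relabel, ih, biUnion_empty'']

theorem varFinsetLeft_relabel_map_id [DecidableEq α] {β' : Type*} (f : β → β')
    (t : L.Term (α ⊕ β)) :
    (t.relabel (Sum.map id f)).varFinsetLeft = t.varFinsetLeft := by
  induction t with
  | var x => cases x <;> simp [Term.relabel]
  | func f ts ih => simp [Term.relabel, ih]

theorem freeVarFinset_castLE [DecidableEq α] {m k : ℕ} (h : m ≤ k)
    (φ : L.BoundedFormula α m) :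
    (φ.castLE h).freeVarFinset = φ.freeVarFinset := by
  induction φ generalizing k with
  | falsum => rfl
  | equal t₁ t₂ => simp [BoundedFormula.castLE, varFinsetLeft_relabel_map_id]
  | rel R ts => simp [BoundedFormula.castLE, varFinsetLeft_relabel_map_id]
  | imp φ ψ ih1 ih2 => simp [BoundedFormula.castLE, ih1, ih2]
  | all φ ih => simp [BoundedFormula.castLE, ih]

theorem relabelAux_inr_isRight {m k : ℕ} (x : Fin m ⊕ Fin k) :
    ∃ i, BoundedFormula.relabelAux (Sum.inr : Fin m → β ⊕ Fin m) k x = Sum.inr i := by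
  cases x <;> simp [BoundedFormula.relabelAux]

theorem freeVarFinset_relabel_inr [DecidableEq β] {m : ℕ} :
    ∀ {k : ℕ} (φ : L.BoundedFormula (Fin m) k),
      ((φ.relabel (Sum.inr : Fin m → β ⊕ Fin m)).freeVarFinset) = ∅ := by
  intro k φ
  induction φ with
  | falsum => rfl
  | equal t₁ t₂ =>
      simp [BoundedFormula.relabel, BoundedFormula.mapTermRel,
        varFinsetLeft_relabel_right _ relabelAux_inr_isRight]
  | rel R ts =>
      simp [BoundedFormula.relabel, BoundedFormula.mapTermRel,
        varFinsetLeft_relabel_right _ relabelAux_inr_isRight, biUnion_empty'']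
  | imp φ ψ ih1 ih2 =>
      simp [BoundedFormula.relabel, BoundedFormula.mapTermRel] at ih1 ih2 ⊢
      simp [ih1, ih2]
  | all φ ih =>
      simp only [BoundedFormula.relabel, BoundedFormula.mapTermRel] at ih ⊢
      simp [freeVarFinset_castLE, ih]

theorem freeVarFinset_alls [DecidableEq α] :
    ∀ {k : ℕ} (φ : L.BoundedFormula α k), φ.alls.freeVarFinset = φ.freeVarFinset
  | 0, φ => rfl
  | k + 1, φ => freeVarFinset_alls φ.all

theorem realize_relabel_inr' [L.Structure M] {n : ℕ} (φ : L.Formula (Fin n))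
    {v : β → M} {x : Fin n → M} :
    (BoundedFormula.relabel Sum.inr φ).Realize v x ↔ φ.Realize x := by
  rw [BoundedFormula.realize_relabel, Formula.Realize, Sum.elim_comp_inr, Fin.castAdd_zero,
    cast_refl, Function.comp_id,
    Subsingleton.elim (x ∘ (natAdd n : Fin 0 → Fin n)) default]

end Aux

section Tr
variable {Pred : Type} {ar : Pred → ℕ} {n m : ℕ}

/-- `A(xs ∘ e)` as a bounded formula with `m` bound variables. -/
def memA (e : Fin n → Fin m) : (Lang Pred ar n).BoundedFormula (Fin n) m :=
  Relations.boundedFormula (L := Lang Pred ar n) (n := n) (Sum.inr ⟨rfl⟩)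
    (fun i => Term.var (Sum.inr (e i)))

theorem freeVarFinset_inf {L : FirstOrder.Language} {α : Type*} [DecidableEq α] {k : ℕ}
    (φ ψ : L.BoundedFormula α k) :
    (φ ⊓ ψ).freeVarFinset = φ.freeVarFinset ∪ ψ.freeVarFinset := by
  simp [Min.min, BoundedFormula.not]

theorem freeVarFinset_top {L : FirstOrder.Language} {α : Type*} [DecidableEq α] {k : ℕ} :
    (⊤ : L.BoundedFormula α k).freeVarFinset = ∅ := by
  simp [Top.top, BoundedFormula.not]

/-- conjunction of `v x = xs (e x)` over a list. -/
def agreeList (e : Fin n → Fin m) (l : List (Fin n)) :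
    (Lang Pred ar n).BoundedFormula (Fin n) m :=
  l.foldr
    (fun x ψ => (Term.bdEqual (Term.var (Sum.inl x)) (Term.var (Sum.inr (e x)))) ⊓ ψ) ⊤

/-- agreement of the free assignment with `xs ∘ e` on `X`. -/
noncomputable def agreeBF (e : Fin n → Fin m) (X : Finset (Fin n)) :
    (Lang Pred ar n).BoundedFormula (Fin n) m :=
  agreeList e X.toList

theorem freeVarFinset_memA (e : Fin n → Fin m) :
    (memA (Pred := Pred) (ar := ar) e).freeVarFinset = ∅ := by
  simp [memA, Relations.boundedFormula, biUnion_empty'']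

theorem freeVarFinset_agreeList (e : Fin n → Fin m) :
    ∀ l : List (Fin n), (agreeList (Pred := Pred) (ar := ar) e l).freeVarFinset = l.toFinset := by
  intro l
  induction l with
  | nil =>
      simp only [agreeList, List.foldr_nil]
      exact freeVarFinset_top
  | cons x l ih =>
      simp only [agreeList, List.foldr_cons] at ih ⊢
      rw [freeVarFinset_inf, ih]
      simp [Term.bdEqual, List.toFinset_cons, Finset.insert_eq, -Finset.singleton_union]

theorem freeVarFinset_agreeBF (e : Fin n → Fin m) (X : Finset (Fin n)) :
    (agreeBF (Pred := Pred) (ar := ar) e X).freeVarFinset = X := by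
  rw [agreeBF, freeVarFinset_agreeList, Finset.toList_toFinset]

variable {O : Type} (M : DepModel (Fin n) Pred ar O)

theorem TStr_relMap_inr (v : Fin n → O) :
    @Structure.RelMap (Lang Pred ar n) O (TStr M) n (Sum.inr ⟨rfl⟩) v ↔ v ∈ M.A := by
  show (∃ s ∈ M.A, ∀ i : Fin n, v (Fin.cast rfl i) = s i) ↔ v ∈ M.A
  constructor
  · rintro ⟨s, hs, h⟩
    have hv : v = s := funext fun i => h i
    rwa [hv]
  · intro h
    exact ⟨v, h, fun i => rfl⟩

theorem realize_memA (e : Fin n → Fin m) (v : Fin n → O) (xs : Fin m → O) :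
    @BoundedFormula.Realize (Lang Pred ar n) O (TStr M) (Fin n) m (memA e) v xs ↔
      (fun i => xs (e i)) ∈ M.A := by
  letI : (Lang Pred ar n).Structure O := TStr M
  rw [memA]
  exact TStr_relMap_inr M _

theorem realize_agreeList (S : (Lang Pred ar n).Structure O) (e : Fin n → Fin m) (v : Fin n → O)
    (xs : Fin m → O) :
    ∀ l : List (Fin n),
      (@BoundedFormula.Realize (Lang Pred ar n) O S (Fin n) m (agreeList e l) v xs ↔
        ∀ x ∈ l, v x = xs (e x)) := by
  letI := S
  intro l
  induction l with
  | nil => simp [agreeList]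
  | cons x l ih =>
      simp only [agreeList, List.foldr_cons] at ih ⊢
      simp [ih, Term.realize]

theorem realize_agreeBF (S : (Lang Pred ar n).Structure O) (e : Fin n → Fin m) (X : Finset (Fin n))
    (v : Fin n → O) (xs : Fin m → O) :
    (@BoundedFormula.Realize (Lang Pred ar n) O S (Fin n) m (agreeBF e X) v xs ↔
      ∀ x ∈ X, v x = xs (e x)) := by
  rw [agreeBF, realize_agreeList]
  constructor
  · intro h x hx
    exact h x (Finset.mem_toList.2 hx)
  · intro h x hx
    exact h x (Finset.mem_toList.1 hx)

/-- The translation. -/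
noncomputable def tr : Formula (Fin n) Pred ar → (Lang Pred ar n).Formula (Fin n)
  | .atom P x =>
      Relations.formula (Sum.inl ⟨P, rfl⟩) (fun i => Term.var (x i))
  | .neg φ => (tr φ).not
  | .conj φ ψ => tr φ ⊓ tr ψ
  | .dd X φ =>
      BoundedFormula.alls
        ((memA id ⊓ agreeBF id X).imp (BoundedFormula.relabel Sum.inr (tr φ)))
  | .dep X y =>
      BoundedFormula.alls
        (((memA (Fin.castAdd n) ⊓ agreeBF (Fin.castAdd n) X) ⊓
            (memA (Fin.natAdd n) ⊓ agreeBF (Fin.natAdd n) X)).imp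
          (Term.bdEqual (Term.var (Sum.inr (Fin.castAdd n y)))
            (Term.var (Sum.inr (Fin.natAdd n y)))))

theorem freeVarFinset_tr (φ : Formula (Fin n) Pred ar) :
    (tr φ).freeVarFinset = Free φ := by
  induction φ with
  | atom P x =>
      simp only [tr, Free, Relations.formula, Relations.boundedFormula,
        BoundedFormula.freeVarFinset, Term.relabel, Term.varFinsetLeft]
      ext a
      simp [eq_comm]
  | neg φ ih =>
      simp [tr, Free, Formula.not, BoundedFormula.not, ih]
  | conj φ ψ ih1 ih2 =>
      simp [tr, Free, Min.min, BoundedFormula.not, ih1, ih2]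
  | dd X φ ih =>
      simp only [tr, Free, freeVarFinset_alls]
      simp [Min.min, BoundedFormula.not, freeVarFinset_memA, freeVarFinset_agreeBF,
        freeVarFinset_relabel_inr]
  | dep X y =>
      simp only [tr, Free, freeVarFinset_alls]
      simp [Min.min, BoundedFormula.not, Term.bdEqual, freeVarFinset_memA,
        freeVarFinset_agreeBF]

theorem realize_tr {O : Type} (M : DepModel (Fin n) Pred ar O)
    (φ : Formula (Fin n) Pred ar) :
    ∀ s ∈ M.A, (Sat M φ s ↔ @Formula.Realize (Lang Pred ar n) O (TStr M) (Fin n) (tr φ) s) := by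
  letI : (Lang Pred ar n).Structure O := TStr M
  induction φ with
  | atom P x =>
      intro s _
      exact Iff.rfl
  | neg φ ih =>
      intro s hs
      simp only [Sat, tr, Formula.realize_not]
      rw [ih s hs]
  | conj φ ψ ih1 ih2 =>
      intro s hs
      simp only [Sat, tr, Formula.realize_inf]
      rw [ih1 s hs, ih2 s hs]
  | dd X φ ih =>
      intro s hs
      simp only [Sat, tr]
      rw [BoundedFormula.realize_alls]
      constructor
      · intro h xs
        rw [BoundedFormula.realize_imp, BoundedFormula.realize_inf, realize_memA,
          realize_agreeBF (TStr M), realize_relabel_inr']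
        rintro ⟨h1, h2⟩
        exact (ih _ h1).mp (h _ h1 (fun x hx => h2 x hx))
      · intro h t ht hagree
        have h' := h t
        rw [BoundedFormula.realize_imp, BoundedFormula.realize_inf, realize_memA,
          realize_agreeBF (TStr M), realize_relabel_inr'] at h'
        exact (ih t ht).mpr (h' ⟨ht, fun x hx => hagree x hx⟩)
  | dep X y =>
      intro s hs
      simp only [Sat, tr]
      rw [BoundedFormula.realize_alls]
      constructor
      · intro h xs
        rw [BoundedFormula.realize_imp, BoundedFormula.realize_inf,
          BoundedFormula.realize_inf, BoundedFormula.realize_inf, realize_memA,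
          realize_memA, realize_agreeBF (TStr M), realize_agreeBF (TStr M),
          BoundedFormula.realize_bdEqual]
        rintro ⟨⟨h1, h2⟩, h3, h4⟩
        have e1 := h _ h1 (fun x hx => h2 x hx)
        have e2 := h _ h3 (fun x hx => h4 x hx)
        show Term.realize (Sum.elim s xs) (Term.var (Sum.inr (Fin.castAdd n y))) =
          Term.realize (Sum.elim s xs) (Term.var (Sum.inr (Fin.natAdd n y)))
        simp only [Term.realize, Sum.elim_inr]
        exact e1.symm.trans e2
      · intro h t ht hagree
        have h' := h (Fin.append s t)
        rw [BoundedFormula.realize_imp, BoundedFormula.realize_inf,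
          BoundedFormula.realize_inf, BoundedFormula.realize_inf, realize_memA,
          realize_memA, realize_agreeBF (TStr M), realize_agreeBF (TStr M),
          BoundedFormula.realize_bdEqual] at h'
        have hcast : (fun i => Fin.append s t (Fin.castAdd n i)) = s :=
          funext fun i => Fin.append_left s t i
        have hnat : (fun i => Fin.append s t (Fin.natAdd n i)) = t :=
          funext fun i => Fin.append_right s t i
        have c1 : (fun i => Fin.append s t (Fin.castAdd n i)) ∈ M.A := by rw [hcast]; exact hs
        have c2 : ∀ x ∈ X, s x = Fin.append s t (Fin.castAdd n x) :=
          fun x _ => (Fin.append_left s t x).symm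
        have c3 : (fun i => Fin.append s t (Fin.natAdd n i)) ∈ M.A := by rw [hnat]; exact ht
        have c4 : ∀ x ∈ X, s x = Fin.append s t (Fin.natAdd n x) :=
          fun x hx => (hagree x hx).trans (Fin.append_right s t x).symm
        have key := h' ⟨⟨c1, c2⟩, c3, c4⟩
        have k2 : Fin.append s t (Fin.castAdd n y) = Fin.append s t (Fin.natAdd n y) := key
        rwa [Fin.append_left, Fin.append_right] at k2

end Tr

/-- First-order translation: there is a map `tr` from LFD formulas over the finite set
of variables `V = Fin n` to first-order formulas of `Lang` with free variables among `V`
such that (i) the free variables of `tr(φ)` are exactly `Free(φ)`, and (ii) for every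
dependence model `M` and admissible assignment `s`, `M, s ⊨ φ` iff `tr(φ)` is true in
the associated structure `T(M)` under the variable assignment `s`. -/
theorem stmt7 (Pred : Type) (ar : Pred → ℕ) (n : ℕ) :
    ∃ tr : Formula (Fin n) Pred ar → (Lang Pred ar n).Formula (Fin n),
      (∀ φ, (tr φ).freeVarFinset = Free φ) ∧
      (∀ (O : Type) (M : DepModel (Fin n) Pred ar O) (φ : Formula (Fin n) Pred ar)
        (s : Fin n → O), s ∈ M.A →
          (Sat M φ s ↔ letI := TStr M; (tr φ).Realize s)) := by
  exact ⟨tr, freeVarFinset_tr, fun O M φ s hs => realize_tr M φ s hs⟩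

end LFD
end

section
/- Every dependence model M = (O, I, A) induces a standard relational model rel(M) = (W, ∼, ‖·‖) with W = A, s ∼_x t iff s(x) = t(x), and ‖P x₁…x_n‖ = {s ∈ A : (s(x₁),…,s(x_n)) ∈ I(P)}; these data satisfy the conditions on standard relational models, and the two semantics agree: for every s ∈ A and every LFD formula φ, M, s ⊨ φ (dependence-model semantics) iff rel(M), s ⊨ φ (relational semantics). -/
namespace LFD

/-- Data of a relational model: for each variable a binary relation on worlds, and a
valuation for atomic formulas `P x₁…x_n`. -/
structure RelModel (V Pred : Type) (ar : Pred → ℕ) (W : Type) where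
  rel : V → W → W → Prop
  val : (P : Pred) → (Fin (ar P) → V) → Set W

variable {V Pred O W : Type} {ar : Pred → ℕ}

/-- `∼_X` : the intersection `⋂_{x ∈ X} ∼_x` (the universal relation for `X = ∅`). -/
def RelModel.relSet (N : RelModel V Pred ar W) (X : Set V) (w v : W) : Prop :=
  ∀ x ∈ X, N.rel x w v

/-- The conditions on a *standard* relational model: each `∼_x` is an equivalence
relation, and the valuation is coherent: if `w ∼_X v`, all variables of the atom are in
`X`, and `w ∈ ‖P x₁…x_n‖`, then `v ∈ ‖P x₁…x_n‖`. -/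
def IsStandard (N : RelModel V Pred ar W) : Prop :=
  (∀ x : V, Equivalence (N.rel x)) ∧
  (∀ (X : Set V) (P : Pred) (xs : Fin (ar P) → V) (w v : W),
    N.relSet X w v → (∀ i, xs i ∈ X) → w ∈ N.val P xs → v ∈ N.val P xs)

/-- Relational semantics for LFD formulas on a relational model. -/
def RSat (N : RelModel V Pred ar W) : Formula V Pred ar → W → Prop
  | .atom P xs, w => w ∈ N.val P xs
  | .neg φ, w => ¬ RSat N φ w
  | .conj φ ψ, w => RSat N φ w ∧ RSat N ψ w
  | .dd X φ, w => ∀ v : W, N.relSet (↑X) w v → RSat N φ v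
  | .dep X y, w => ∀ v : W, N.relSet (↑X) w v → N.rel y w v

/-- Every dependence model `M` induces a standard relational model `rel(M)` on the set
of worlds `W = A`, with `s ∼_x t` iff `s(x) = t(x)` and the valuation induced by `I`;
and the two semantics agree on it. -/
theorem stmt8 (M : DepModel V Pred ar O) :
    letI N : RelModel V Pred ar (↥M.A) :=
      { rel := fun x s t => s.1 x = t.1 x
        val := fun P xs => {s : ↥M.A | (fun i => s.1 (xs i)) ∈ M.I P} }
    IsStandard N ∧
      ∀ (s : ↥M.A) (φ : Formula V Pred ar), Sat M φ s.1 ↔ RSat N φ s := by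
  constructor
  · constructor
    · intro x
      exact ⟨fun _ => rfl, fun h => h.symm, fun h1 h2 => h1.trans h2⟩
    · intro X P xs w v hrel hxs hw
      have : (fun i => w.1 (xs i)) = fun i => v.1 (xs i) := funext fun i => hrel _ (hxs i)
      simpa [this] using hw
  · intro s φ
    induction φ generalizing s with
    | atom P xs => simp [Sat, RSat]
    | neg φ ih => simp [Sat, RSat, ih]
    | conj φ ψ ih1 ih2 => simp [Sat, RSat, ih1, ih2]
    | dd X φ ih =>
      simp only [Sat, RSat]
      constructor
      · intro h v hv
        exact (ih v).mp (h v.1 v.2 hv)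
      · intro h t ht hag
        exact (ih ⟨t, ht⟩).mpr (h ⟨t, ht⟩ hag)
    | dep X y =>
      simp only [Sat, RSat]
      exact ⟨fun h v hv => h v.1 v.2 hv, fun h t ht hag => h ⟨t, ht⟩ hag⟩

end LFD
end

section
/- Every standard relational model 𝓜 = (W, ∼, ‖·‖) induces a dependence model dep(𝓜) = (O^∼, I^∼, A^∼), where O^∼ = {(x, [w]_x) : w ∈ W, x ∈ V} (with [w]_x the ∼_x-equivalence class of w), A^∼ = {w^∼ : w ∈ W} with w^∼(x) = (x, [w]_x), and I^∼(P) = {((x₁,[w]_{x₁}),…,(x_n,[w]_{x_n})) : w ∈ W, x₁,…,x_n ∈ V, w ∈ ‖P x₁…x_n‖}; this interpretation is well defined, and the two semantics agree: for every w ∈ W and LFD formula φ, 𝓜, w ⊨ φ (relational semantics) iff dep(𝓜), w^∼ ⊨ φ (dependence-model semantics). -/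
namespace LFD

variable {V Pred O W : Type} {ar : Pred → ℕ}

/-- The assignment `w^∼` induced by a world `w`: `w^∼(x) = (x, [w]_x)`, where `[w]_x` is
the `∼_x`-equivalence class of `w` (encoded as a set of worlds). -/
def worldAsn (N : RelModel V Pred ar W) (w : W) : V → V × Set W :=
  fun x => (x, {v : W | N.rel x w v})

lemma class_eq_iff (N : RelModel V Pred ar W) (hN : ∀ x : V, Equivalence (N.rel x))
    (x : V) (w v : W) :
    ({u : W | N.rel x w u} = {u : W | N.rel x v u}) ↔ N.rel x w v := by
  constructor
  · intro h
    have : v ∈ {u : W | N.rel x v u} := (hN x).refl v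
    rw [← h] at this; exact this
  · intro h
    ext u; simp only [Set.mem_setOf_eq]
    exact ⟨fun h2 => (hN x).trans ((hN x).symm h) h2, fun h2 => (hN x).trans h h2⟩

lemma agree_iff (N : RelModel V Pred ar W) (hN : ∀ x : V, Equivalence (N.rel x))
    (X : Set V) (w v : W) :
    agree X (worldAsn N w) (worldAsn N v) ↔ N.relSet X w v := by
  constructor
  · intro h x hx
    have := h x hx
    simp only [worldAsn, Prod.mk.injEq] at this
    exact (class_eq_iff N hN x w v).1 this.2
  · intro h x hx
    simp only [worldAsn, Prod.mk.injEq]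
    exact ⟨trivial, (class_eq_iff N hN x w v).2 (h x hx)⟩

/-- Every standard relational model `𝓜` induces a dependence model `dep(𝓜)` with
objects `O^∼ = {(x, [w]_x)}`, admissible assignments `A^∼ = {w^∼ : w ∈ W}` and
interpretation `I^∼(P) = {((x₁,[w]_{x₁}),…,(x_n,[w]_{x_n})) : w ∈ ‖P x₁…x_n‖}`,
and the two semantics agree: `𝓜, w ⊨ φ` iff `dep(𝓜), w^∼ ⊨ φ`. -/
theorem stmt9 (N : RelModel V Pred ar W) (hN : IsStandard N) :
    letI M : DepModel V Pred ar (V × Set W) :=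
      { I := fun P => {o | ∃ (w : W) (xs : Fin (ar P) → V),
          w ∈ N.val P xs ∧ ∀ i, o i = (xs i, {v : W | N.rel (xs i) w v})}
        A := {s | ∃ w : W, s = worldAsn N w} }
    ∀ (w : W) (φ : Formula V Pred ar), RSat N φ w ↔ Sat M φ (worldAsn N w) := by
  intro w φ
  induction φ generalizing w with
  | atom P xs =>
    simp only [RSat, Sat, Set.mem_setOf_eq]
    constructor
    · intro h
      exact ⟨w, xs, h, fun i => rfl⟩
    · rintro ⟨w', xs', h, heq⟩
      have hx : ∀ i, xs i = xs' i := fun i => congrArg Prod.fst (heq i)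
      have hxs : xs = xs' := funext hx
      subst hxs
      have hrel : N.relSet (Set.range xs) w' w := by
        rintro x ⟨i, rfl⟩
        have := congrArg Prod.snd (heq i)
        simp only [worldAsn] at this
        exact (hN.1 (xs i)).symm ((class_eq_iff N hN.1 (xs i) w w').1 this)
      exact hN.2 (Set.range xs) P xs w' w hrel (fun i => ⟨i, rfl⟩) h
  | neg φ ih => simp only [RSat, Sat]; exact not_congr (ih w)
  | conj φ ψ ih1 ih2 => simp only [RSat, Sat]; exact and_congr (ih1 w) (ih2 w)
  | dd X φ ih =>
    simp only [RSat, Sat]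
    constructor
    · rintro h t ⟨v, rfl⟩ hag
      exact (ih v).1 (h v ((agree_iff N hN.1 _ w v).1 hag))
    · intro h v hrel
      exact (ih v).2 (h (worldAsn N v) ⟨v, rfl⟩ ((agree_iff N hN.1 _ w v).2 hrel))
  | dep X y =>
    simp only [RSat, Sat]
    constructor
    · rintro h t ⟨v, rfl⟩ hag
      have := h v ((agree_iff N hN.1 _ w v).1 hag)
      simp only [worldAsn, Prod.mk.injEq]
      exact ⟨trivial, (class_eq_iff N hN.1 y w v).2 this⟩
    · intro h v hrel
      have := h (worldAsn N v) ⟨v, rfl⟩ ((agree_iff N hN.1 _ w v).2 hrel)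
      simp only [worldAsn, Prod.mk.injEq] at this
      exact (class_eq_iff N hN.1 y w v).1 this.2

end LFD
end

section
/- For every dependence model M = (O, I, A) and every assignment s ∈ A, the Φ-type type(s) = {ψ ∈ Φ : M, s ⊨ ψ} is a Hintikka set for Φ. Moreover, the set type(A) = {type(s) : s ∈ A} of all Φ-types realized in M is a type model for Φ. -/
namespace LFD

variable {V Pred O : Type} {ar : Pred → ℕ}

/-- All variables occurring in a formula (including those in the subscripts). -/
def vars [DecidableEq V] : Formula V Pred ar → Finset V
  | .atom _ x => Finset.univ.image x
  | .neg φ => vars φ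
  | .conj φ ψ => vars φ ∪ vars ψ
  | .dd X φ => X ∪ vars φ
  | .dep X y => insert y X

/-- The set of subformulas of a formula (including the formula itself). -/
def Subf : Formula V Pred ar → Set (Formula V Pred ar)
  | .atom P x => {Formula.atom P x}
  | .neg φ => insert (Formula.neg φ) (Subf φ)
  | .conj φ ψ => insert (Formula.conj φ ψ) (Subf φ ∪ Subf ψ)
  | .dd X φ => insert (Formula.dd X φ) (Subf φ)
  | .dep X y => {Formula.dep X y}

/-- `V_F`: the set of all variables occurring in the set of formulas `F`. -/
def VF [DecidableEq V] (F : Set (Formula V Pred ar)) : Set V :=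
  ⋃ φ ∈ F, ↑(vars φ)

/-- `Φ_F`: add to `F` all dependence atoms `D_X y` for `X, {y} ⊆ V_F`, close under
subformulas, and add one round of negations (leaving explicit negations as they are). -/
def Phi [DecidableEq V] (F : Set (Formula V Pred ar)) : Set (Formula V Pred ar) :=
  let S : Set (Formula V Pred ar) :=
    (⋃ φ ∈ F, Subf φ) ∪
      {f | ∃ (X : Finset V) (y : V), ↑X ⊆ VF F ∧ y ∈ VF F ∧ f = Formula.dep X y}
  S ∪ {f | ∃ ψ ∈ S, (¬ ∃ θ, ψ = Formula.neg θ) ∧ f = Formula.neg ψ}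

/-- The dependence closure of `X` with respect to a set `Sg` of formulas:
`D_X^Sg = {y : D_X y ∈ Sg}`. -/
def depClos (Sg : Set (Formula V Pred ar)) (X : Finset V) : Set V :=
  {y | Formula.dep X y ∈ Sg}

/-- A Hintikka set for `Φ` (with all formulas mentioned ranging over `Φ` only). -/
structure IsHintikka [DecidableEq V] (Φ : Set (Formula V Pred ar))
    (Sg : Set (Formula V Pred ar)) : Prop where
  subset : Sg ⊆ Φ
  negIff : ∀ ψ, Formula.neg ψ ∈ Φ → (Formula.neg ψ ∈ Sg ↔ ψ ∉ Sg)
  conjIff : ∀ φ ψ, Formula.conj φ ψ ∈ Φ → (Formula.conj φ ψ ∈ Sg ↔ φ ∈ Sg ∧ ψ ∈ Sg)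
  ddElim : ∀ (X : Finset V) (ψ : Formula V Pred ar), Formula.dd X ψ ∈ Sg → ψ ∈ Sg
  proj : ∀ (X : Finset V) (x : V), x ∈ X → Formula.dep X x ∈ Φ → Formula.dep X x ∈ Sg
  trans : ∀ (X Y : Finset V) (z : V), (∀ y ∈ Y, Formula.dep X y ∈ Sg) →
    Formula.dep Y z ∈ Sg → Formula.dep X z ∈ Φ → Formula.dep X z ∈ Sg

/-- `Sg ∼_X Δ` : `Sg` and `Δ` contain the same formulas `ψ ∈ Φ` with
`Free(ψ) ⊆ D_X^Sg`. -/
def simX [DecidableEq V] (Φ Sg Δ : Set (Formula V Pred ar)) (X : Finset V) : Prop :=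
  ∀ ψ ∈ Φ, ↑(Free ψ) ⊆ depClos Sg X → (ψ ∈ Sg ↔ ψ ∈ Δ)

/-- A type model for `Φ`: a family of Hintikka sets for `Φ` satisfying the witness
condition (f) for dependence modalities and the uniformity condition (g) for constants. -/
structure IsTypeModel [DecidableEq V] (Φ : Set (Formula V Pred ar))
    (Mf : Set (Set (Formula V Pred ar))) : Prop where
  hintikka : ∀ Sg ∈ Mf, IsHintikka Φ Sg
  witness : ∀ Sg ∈ Mf, ∀ (X : Finset V) (ψ : Formula V Pred ar),
    Formula.dd X ψ ∈ Φ → Formula.dd X ψ ∉ Sg →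
      ∃ Δ ∈ Mf, ψ ∉ Δ ∧ simX Φ Sg Δ X
  constants : ∀ Sg ∈ Mf, ∀ Δ ∈ Mf, simX Φ Sg Δ ∅

/-- The `Φ`-type of an assignment `s` in a dependence model `M`. -/
def typeOf [DecidableEq V] (Φ : Set (Formula V Pred ar)) (M : DepModel V Pred ar O)
    (s : V → O) : Set (Formula V Pred ar) :=
  {ψ ∈ Φ | Sat M ψ s}

end LFD

open LFD

namespace LFD

variable {V Pred O : Type} {ar : Pred → ℕ}

lemma mem_Subf_self (φ : Formula V Pred ar) : φ ∈ Subf φ := by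
  cases φ <;> simp [Subf]

lemma Subf_trans {θ φ : Formula V Pred ar} (h : θ ∈ Subf φ) : Subf θ ⊆ Subf φ := by
  induction φ with
  | atom P x => simp [Subf] at h; subst h; exact subset_rfl
  | neg φ ih =>
    simp [Subf] at h
    rcases h with h | h
    · subst h; exact subset_rfl
    · exact (ih h).trans (Set.subset_insert _ _)
  | conj φ ψ ihφ ihψ =>
    simp [Subf] at h
    rcases h with h | h | h
    · subst h; exact subset_rfl
    · exact (ihφ h).trans ((Set.subset_union_left).trans (Set.subset_insert _ _))
    · exact (ihψ h).trans ((Set.subset_union_right).trans (Set.subset_insert _ _))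
  | dd X φ ih =>
    simp [Subf] at h
    rcases h with h | h
    · subst h; exact subset_rfl
    · exact (ih h).trans (Set.subset_insert _ _)
  | dep X y => simp [Subf] at h; subst h; exact subset_rfl

/-- The core set `S` inside `Phi` is subformula-closed, hence so is membership in it. -/
lemma S_subclosed [DecidableEq V] (F : Set (Formula V Pred ar)) {θ : Formula V Pred ar}
    (h : θ ∈ ((⋃ φ ∈ F, Subf φ) ∪
      {f | ∃ (X : Finset V) (y : V), ↑X ⊆ VF F ∧ y ∈ VF F ∧ f = Formula.dep X y} :
      Set (Formula V Pred ar))) :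
    Subf θ ⊆ ((⋃ φ ∈ F, Subf φ) ∪
      {f | ∃ (X : Finset V) (y : V), ↑X ⊆ VF F ∧ y ∈ VF F ∧ f = Formula.dep X y}) := by
  rcases h with h | h
  · simp only [Set.mem_iUnion] at h
    rcases h with ⟨φ, hφ, hθ⟩
    intro ψ hψ
    exact Or.inl (Set.mem_iUnion₂.mpr ⟨φ, hφ, Subf_trans hθ hψ⟩)
  · rcases h with ⟨X, y, _, _, rfl⟩
    intro ψ hψ
    simp [Subf] at hψ; subst hψ
    exact Or.inr ⟨X, y, ‹_›, ‹_›, rfl⟩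

lemma Phi_neg [DecidableEq V] {F : Set (Formula V Pred ar)} {ψ : Formula V Pred ar}
    (h : Formula.neg ψ ∈ Phi F) : ψ ∈ Phi F := by
  rcases h with h | h
  · exact Or.inl (S_subclosed F h (by simp [Subf, mem_Subf_self]))
  · rcases h with ⟨ψ', hψ', _, heq⟩
    cases heq; exact Or.inl hψ'

lemma Phi_conj [DecidableEq V] {F : Set (Formula V Pred ar)} {φ ψ : Formula V Pred ar}
    (h : Formula.conj φ ψ ∈ Phi F) : φ ∈ Phi F ∧ ψ ∈ Phi F := by
  rcases h with h | h
  · exact ⟨Or.inl (S_subclosed F h (by simp [Subf, mem_Subf_self])),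
      Or.inl (S_subclosed F h (by simp [Subf, mem_Subf_self]))⟩
  · rcases h with ⟨ψ', _, _, heq⟩; cases heq

lemma Phi_dd [DecidableEq V] {F : Set (Formula V Pred ar)} {X : Finset V}
    {ψ : Formula V Pred ar} (h : Formula.dd X ψ ∈ Phi F) : ψ ∈ Phi F := by
  rcases h with h | h
  · exact Or.inl (S_subclosed F h (by simp [Subf, mem_Subf_self]))
  · rcases h with ⟨ψ', _, _, heq⟩; cases heq

/-- Locality/transfer lemma: if `s, t ∈ A` agree on `X` and every free variable of `θ`
semantically depends on `X` at `s`, then `θ` has the same truth value at `s` and `t`. -/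
lemma sat_transfer [DecidableEq V] (M : DepModel V Pred ar O) {s t : V → O}
    (hs : s ∈ M.A) (ht : t ∈ M.A) (X : Finset V) (hag : agree (↑X) s t) :
    ∀ θ : Formula V Pred ar, (∀ y ∈ Free θ, Sat M (Formula.dep X y) s) →
      (Sat M θ s ↔ Sat M θ t) := by
  intro θ
  induction θ with
  | atom P x =>
    intro hfree
    have : ∀ i, s (x i) = t (x i) := fun i =>
      hfree (x i) (by simp [Free]) t ht hag
    have heq : (fun i => s (x i)) = (fun i => t (x i)) := funext this
    simp only [Sat, heq]
  | neg φ ih =>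
    intro hfree
    have := ih (fun y hy => hfree y (by simpa [Free] using hy))
    simp [Sat, this]
  | conj φ ψ ihφ ihψ =>
    intro hfree
    have h1 := ihφ (fun y hy => hfree y (by simp [Free, hy]))
    have h2 := ihψ (fun y hy => hfree y (by simp [Free, hy]))
    simp [Sat, h1, h2]
  | dd Y φ ih =>
    intro hfree
    have hY : ∀ y ∈ Y, s y = t y := fun y hy =>
      hfree y (by simpa [Free] using hy) t ht hag
    have key : ∀ u : V → O, agree (↑Y) s u ↔ agree (↑Y) t u := by
      intro u
      constructor <;> intro h y hy
      · rw [← hY y hy]; exact h y hy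
      · rw [hY y hy]; exact h y hy
    simp only [Sat]
    constructor <;> intro h u hu hagu
    · exact h u hu ((key u).mpr hagu)
    · exact h u hu ((key u).mp hagu)
  | dep Y z =>
    intro hfree
    have hY : agree (↑Y) s t := fun y hy =>
      hfree y (by simpa [Free] using hy) t ht hag
    simp only [Sat]
    constructor <;> intro h
    · have hst : s z = t z := h t ht hY
      intro u hu hagu
      rw [← hst]
      exact h u hu (fun y hy => (hY y hy).trans (hagu y hy))
    · have hts : t z = s z := h s hs (fun y hy => (hY y hy).symm)
      intro u hu hagu
      rw [← hts]
      exact h u hu (fun y hy => (hY y hy).symm.trans (hagu y hy))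

end LFD

/-- For every dependence model `M` and admissible assignment `s ∈ A`, the `Φ_F`-type of
`s` is a Hintikka set for `Φ_F`; moreover, the set of all `Φ_F`-types realized in `M` is
a type model for `Φ_F`. -/
theorem stmt10 {V Pred O : Type} [DecidableEq V] {ar : Pred → ℕ}
    (F : Set (Formula V Pred ar)) (hF : F.Finite) (M : DepModel V Pred ar O) :
    (∀ s ∈ M.A, IsHintikka (Phi F) (typeOf (Phi F) M s)) ∧
    IsTypeModel (Phi F) {T | ∃ s ∈ M.A, T = typeOf (Phi F) M s} := by
  have hint : ∀ s ∈ M.A, IsHintikka (Phi F) (typeOf (Phi F) M s) := by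
    intro s hs
    constructor
    · intro ψ hψ; exact hψ.1
    · intro ψ hneg
      constructor
      · rintro ⟨_, hsat⟩ ⟨_, hsat'⟩; exact hsat hsat'
      · intro hnot
        refine ⟨hneg, fun hsat => hnot ⟨Phi_neg hneg, hsat⟩⟩
    · intro φ ψ hconj
      constructor
      · rintro ⟨_, h1, h2⟩
        exact ⟨⟨(Phi_conj hconj).1, h1⟩, ⟨(Phi_conj hconj).2, h2⟩⟩
      · rintro ⟨⟨_, h1⟩, ⟨_, h2⟩⟩; exact ⟨hconj, h1, h2⟩
    · rintro X ψ ⟨hmem, hsat⟩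
      exact ⟨Phi_dd hmem, hsat s hs (fun y _ => rfl)⟩
    · intro X x hx hmem
      exact ⟨hmem, fun t _ hag => hag x (by simpa using hx)⟩
    · intro X Y z hXY hYz hmem
      refine ⟨hmem, fun t ht hag => hYz.2 t ht (fun y hy => ?_)⟩
      exact (hXY y hy).2 t ht hag
  refine ⟨hint, ?_, ?_, ?_⟩
  · rintro Sg ⟨s, hs, rfl⟩; exact hint s hs
  · rintro Sg ⟨s, hs, rfl⟩ X ψ hmem hnot
    have hnsat : ¬ Sat M (Formula.dd X ψ) s := fun h => hnot ⟨hmem, h⟩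
    simp only [Sat, not_forall] at hnsat
    obtain ⟨t, ht, hag, hns⟩ := hnsat
    refine ⟨typeOf (Phi F) M t, ⟨t, ht, rfl⟩, fun h => hns h.2, ?_⟩
    intro θ hθ hfree
    have htrans := sat_transfer M hs ht X hag θ
      (fun y hy => (hfree hy).2)
    constructor
    · rintro ⟨_, h⟩; exact ⟨hθ, htrans.mp h⟩
    · rintro ⟨_, h⟩; exact ⟨hθ, htrans.mpr h⟩
  · rintro Sg ⟨s, hs, rfl⟩ Δ ⟨t, ht, rfl⟩
    intro θ hθ hfree
    have htrans := sat_transfer M hs ht (∅ : Finset V)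
      (fun y hy => by simp at hy) θ (fun y hy => (hfree hy).2)
    constructor
    · rintro ⟨_, h⟩; exact ⟨hθ, htrans.mp h⟩
    · rintro ⟨_, h⟩; exact ⟨hθ, htrans.mpr h⟩
end

section
/- (Representation of type models) For every nonempty type model 𝔐 for Φ, there exists a dependence model M = (O, I, A) such that 𝔐 = {type(s) : s ∈ A}, where type(s) = {ψ ∈ Φ : M, s ⊨ ψ}. -/
open LFD
set_option linter.unusedSectionVars false
namespace LFDRep
set_option linter.unusedSectionVars false

open LFD

variable {V Pred : Type} [DecidableEq V] {ar : Pred → ℕ}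

lemma self_mem_Subf (φ : Formula V Pred ar) : φ ∈ Subf φ := by
  cases φ <;> simp [Subf]

lemma Subf_trans {φ ψ : Formula V Pred ar} (h : ψ ∈ Subf φ) : Subf ψ ⊆ Subf φ := by
  induction φ with
  | atom P x => simp only [Subf, Set.mem_singleton_iff] at h; subst h; exact subset_rfl
  | neg φ ih =>
      rcases (Set.mem_insert_iff.mp h) with h | h
      · subst h; exact subset_rfl
      · exact (ih h).trans (Set.subset_insert _ _)
  | conj φ ψ' ih1 ih2 =>
      rcases (Set.mem_insert_iff.mp h) with h | h
      · subst h; exact subset_rfl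
      · rcases h with h | h
        · exact (ih1 h).trans ((Set.subset_union_left).trans (Set.subset_insert _ _))
        · exact (ih2 h).trans ((Set.subset_union_right).trans (Set.subset_insert _ _))
  | dd X φ ih =>
      rcases (Set.mem_insert_iff.mp h) with h | h
      · subst h; exact subset_rfl
      · exact (ih h).trans (Set.subset_insert _ _)
  | dep X y => simp only [Subf, Set.mem_singleton_iff] at h; subst h; exact subset_rfl

lemma vars_mono {φ ψ : Formula V Pred ar} (h : ψ ∈ Subf φ) : vars ψ ⊆ vars φ := by
  induction φ with
  | atom P x => simp only [Subf, Set.mem_singleton_iff] at h; subst h; exact subset_rfl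
  | neg φ ih =>
      rcases (Set.mem_insert_iff.mp h) with h | h
      · subst h; exact subset_rfl
      · exact ih h
  | conj φ ψ' ih1 ih2 =>
      rcases (Set.mem_insert_iff.mp h) with h | h
      · subst h; exact subset_rfl
      · rcases h with h | h
        · exact (ih1 h).trans Finset.subset_union_left
        · exact (ih2 h).trans Finset.subset_union_right
  | dd X φ ih =>
      rcases (Set.mem_insert_iff.mp h) with h | h
      · subst h; exact subset_rfl
      · exact (ih h).trans Finset.subset_union_right
  | dep X y => simp only [Subf, Set.mem_singleton_iff] at h; subst h; exact subset_rfl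

/-- The "first layer" of `Phi`. -/
def PhiS (F : Set (Formula V Pred ar)) : Set (Formula V Pred ar) :=
  (⋃ φ ∈ F, Subf φ) ∪
    {f | ∃ (X : Finset V) (y : V), ↑X ⊆ VF F ∧ y ∈ VF F ∧ f = Formula.dep X y}

lemma mem_Phi {F : Set (Formula V Pred ar)} {f : Formula V Pred ar} :
    f ∈ Phi F ↔ f ∈ PhiS F ∨
      ∃ ψ ∈ PhiS F, (¬ ∃ θ, ψ = Formula.neg θ) ∧ f = Formula.neg ψ := Iff.rfl

lemma PhiS_sub_Phi {F : Set (Formula V Pred ar)} : PhiS F ⊆ Phi F :=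
  fun _ h => mem_Phi.mpr (Or.inl h)

lemma Subf_mem_PhiS {F : Set (Formula V Pred ar)} {φ ψ : Formula V Pred ar}
    (hφ : φ ∈ PhiS F ∨ ∃ χ ∈ F, φ ∈ Subf χ) (hψ : ψ ∈ Subf φ)
    (hd : ∀ X y, φ ≠ Formula.dep X y) : ψ ∈ PhiS F ∨ ∃ χ ∈ F, ψ ∈ Subf χ := by
  rcases hφ with hφ | ⟨χ, hχ, hsub⟩
  · rcases hφ with hφ | ⟨X, y, _, _, rfl⟩
    · simp only [Set.mem_iUnion] at hφ
      obtain ⟨χ, hχ, hsub⟩ := hφ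
      exact Or.inr ⟨χ, hχ, Subf_trans hsub hψ⟩
    · exact absurd rfl (hd X y)
  · exact Or.inr ⟨χ, hχ, Subf_trans hsub hψ⟩

lemma subF_Phi {F : Set (Formula V Pred ar)} {χ ψ : Formula V Pred ar}
    (hχ : χ ∈ F) (hψ : ψ ∈ Subf χ) : ψ ∈ PhiS F :=
  Or.inl (Set.mem_iUnion.mpr ⟨χ, Set.mem_iUnion.mpr ⟨hχ, hψ⟩⟩)

/-- Any `f ∈ Phi F` that is not a `dep` atom and not a negation lies in the
subformula part. -/
lemma Phi_cases {F : Set (Formula V Pred ar)} {f : Formula V Pred ar} (hf : f ∈ Phi F) :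
    (∃ χ ∈ F, f ∈ Subf χ) ∨
    (∃ (X : Finset V) (y : V), ↑X ⊆ VF F ∧ y ∈ VF F ∧ f = Formula.dep X y) ∨
    (∃ ψ, ψ ∈ PhiS F ∧ f = Formula.neg ψ) := by
  rcases mem_Phi.mp hf with hf | ⟨ψ, hψ, _, rfl⟩
  · rcases hf with hf | hf
    · simp only [Set.mem_iUnion] at hf
      obtain ⟨χ, hχ, h⟩ := hf
      exact Or.inl ⟨χ, hχ, h⟩
    · exact Or.inr (Or.inl hf)
  · exact Or.inr (Or.inr ⟨ψ, hψ, rfl⟩)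

lemma PhiS_mem_Phi_of_sub {F : Set (Formula V Pred ar)} {ψ χ : Formula V Pred ar}
    (h : ψ ∈ PhiS F) (hsub : χ ∈ Subf ψ) (hd : ∀ X y, ψ ≠ Formula.dep X y) :
    χ ∈ Phi F := by
  rcases h with h | ⟨X, y, _, _, rfl⟩
  · simp only [Set.mem_iUnion] at h
    obtain ⟨θ, hθ, h⟩ := h
    exact PhiS_sub_Phi (subF_Phi hθ (Subf_trans h hsub))
  · exact absurd rfl (hd X y)

lemma neg_Phi {F : Set (Formula V Pred ar)} {ψ : Formula V Pred ar}
    (h : Formula.neg ψ ∈ Phi F) : ψ ∈ Phi F := by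
  rcases Phi_cases h with ⟨χ, hχ, hsub⟩ | ⟨X, y, _, _, heq⟩ | ⟨θ, hθ, heq⟩
  · exact PhiS_sub_Phi (subF_Phi hχ (Subf_trans hsub
      (Set.mem_insert_iff.mpr (Or.inr (self_mem_Subf ψ)))))
  · exact absurd heq (by simp)
  · cases heq
    exact PhiS_sub_Phi hθ

lemma conj_Phi {F : Set (Formula V Pred ar)} {φ ψ : Formula V Pred ar}
    (h : Formula.conj φ ψ ∈ Phi F) : φ ∈ Phi F ∧ ψ ∈ Phi F := by
  rcases Phi_cases h with ⟨χ, hχ, hsub⟩ | ⟨X, y, _, _, heq⟩ | ⟨θ, hθ, heq⟩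
  · constructor
    · exact PhiS_sub_Phi (subF_Phi hχ (Subf_trans hsub (Set.mem_insert_iff.mpr
        (Or.inr (Or.inl (self_mem_Subf φ))))))
    · exact PhiS_sub_Phi (subF_Phi hχ (Subf_trans hsub (Set.mem_insert_iff.mpr
        (Or.inr (Or.inr (self_mem_Subf ψ))))))
  · exact absurd heq (by simp)
  · exact absurd heq (by simp)

lemma dd_Phi {F : Set (Formula V Pred ar)} {X : Finset V} {ψ : Formula V Pred ar}
    (h : Formula.dd X ψ ∈ Phi F) : ψ ∈ Phi F ∧ ↑X ⊆ VF F := by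
  rcases Phi_cases h with ⟨χ, hχ, hsub⟩ | ⟨X', y, _, _, heq⟩ | ⟨θ, hθ, heq⟩
  · constructor
    · exact PhiS_sub_Phi (subF_Phi hχ (Subf_trans hsub (Set.mem_insert_iff.mpr
        (Or.inr (self_mem_Subf ψ)))))
    · have hv : vars (Formula.dd X ψ) ⊆ vars χ := vars_mono hsub
      intro x hx
      have : x ∈ vars χ := hv (by simp [vars]; exact Or.inl hx)
      exact Set.mem_iUnion.mpr ⟨χ, Set.mem_iUnion.mpr ⟨hχ, this⟩⟩
  · exact absurd heq (by simp)
  · exact absurd heq (by simp)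

lemma dep_Phi {F : Set (Formula V Pred ar)} {X : Finset V} {y : V}
    (h : Formula.dep X y ∈ Phi F) : ↑X ⊆ VF F ∧ y ∈ VF F := by
  rcases Phi_cases h with ⟨χ, hχ, hsub⟩ | ⟨X', y', hX, hy, heq⟩ | ⟨θ, hθ, heq⟩
  · have hv : vars (Formula.dep X y) ⊆ vars χ := vars_mono hsub
    have hvf : (↑(vars χ) : Set V) ⊆ VF F :=
      fun x hx => Set.mem_iUnion.mpr ⟨χ, Set.mem_iUnion.mpr ⟨hχ, hx⟩⟩
    constructor
    · intro x hx
      exact hvf (hv (by simp [vars]; exact Or.inr hx))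
    · exact hvf (hv (by simp [vars]))
  · cases heq; exact ⟨hX, hy⟩
  · exact absurd heq (by simp)

lemma dep_mem_Phi {F : Set (Formula V Pred ar)} {X : Finset V} {y : V}
    (hX : ↑X ⊆ VF F) (hy : y ∈ VF F) : Formula.dep X y ∈ Phi F :=
  PhiS_sub_Phi (Or.inr ⟨X, y, hX, hy, rfl⟩)


/-! ### The tree of types -/

/-- Labels along a path: the label of `[]` is the root type `S0`; the label of
`m :: l` is `m.1`. -/
def lab (S0 : Set (Formula V Pred ar)) :
    List (Set (Formula V Pred ar) × Finset V) → Set (Formula V Pred ar)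
  | [] => S0
  | m :: _ => m.1

open Classical in
/-- The origin of the object held by node `l` at variable `x`: walk towards the root
while `x` is in the dependence closure of the move subscript. -/
noncomputable def rep (S0 : Set (Formula V Pred ar)) :
    List (Set (Formula V Pred ar) × Finset V) → V →
      List (Set (Formula V Pred ar) × Finset V)
  | [], _ => []
  | m :: l, x => if Formula.dep m.2 x ∈ lab S0 l then rep S0 l x else m :: l

/-- Valid paths. -/
def Ok (F : Set (Formula V Pred ar)) (Mf : Set (Set (Formula V Pred ar)))
    (S0 : Set (Formula V Pred ar)) :
    List (Set (Formula V Pred ar) × Finset V) → Prop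
  | [] => True
  | m :: l => Ok F Mf S0 l ∧ m.1 ∈ Mf ∧ ↑m.2 ⊆ VF F ∧ simX (Phi F) (lab S0 l) m.1 m.2

variable {F : Set (Formula V Pred ar)} {Mf : Set (Set (Formula V Pred ar))}
  {S0 : Set (Formula V Pred ar)}

lemma rep_suffix (S0 : Set (Formula V Pred ar))
    (l : List (Set (Formula V Pred ar) × Finset V)) (x : V) : rep S0 l x <:+ l := by
  induction l with
  | nil => simp [rep]
  | cons m l ih =>
      rw [rep]
      split
      · exact ih.trans (List.suffix_cons _ _)
      · exact List.suffix_refl _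

lemma Ok_suffix {l c : List (Set (Formula V Pred ar) × Finset V)}
    (h : Ok F Mf S0 l) (hc : c <:+ l) : Ok F Mf S0 c := by
  induction l with
  | nil => rw [List.suffix_nil] at hc; subst hc; trivial
  | cons m l ih =>
      rcases List.suffix_cons_iff.mp hc with rfl | hc
      · exact h
      · exact ih h.1 hc

lemma lab_mem (hS0 : S0 ∈ Mf) {l : List (Set (Formula V Pred ar) × Finset V)}
    (h : Ok F Mf S0 l) : lab S0 l ∈ Mf := by
  cases l with
  | nil => exact hS0
  | cons m l => exact h.2.1

/-- If the origin of `x` at `l` is above the ancestor `c`, then the origin is the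
same computed from `c`. -/
lemma lemF {x : V} :
    ∀ l c : List (Set (Formula V Pred ar) × Finset V), c <:+ l →
      rep S0 l x <:+ c → rep S0 c x = rep S0 l x := by
  intro l
  induction l with
  | nil =>
      intro c hc _
      rw [List.suffix_nil] at hc; subst hc; rfl
  | cons m l ih =>
      intro c hc hr
      rcases List.suffix_cons_iff.mp hc with rfl | hc
      · rfl
      · by_cases hd : Formula.dep m.2 x ∈ lab S0 l
        · rw [rep, if_pos hd] at hr ⊢
          exact ih c hc hr
        · exfalso
          rw [rep, if_neg hd] at hr
          have := (hr.trans hc).length_le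
          simp at this

/-- Common base: if `l` and `l'` assign the same objects to all of `X`, there is a
common ancestor `c` through which all the sharing goes. -/
lemma lemU {X : Finset V} {l l' : List (Set (Formula V Pred ar) × Finset V)}
    (hrep : ∀ x ∈ X, rep S0 l x = rep S0 l' x) :
    ∃ c, c <:+ l ∧ c <:+ l' ∧
      (∀ x ∈ X, rep S0 l x = rep S0 c x ∧ rep S0 l' x = rep S0 c x) := by
  rcases X.eq_empty_or_nonempty with rfl | hne
  · exact ⟨[], List.nil_suffix, List.nil_suffix, by simp⟩
  · obtain ⟨x₁, hx₁, hmax⟩ := X.exists_max_image (fun x => (rep S0 l x).length) hne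
    refine ⟨rep S0 l x₁, rep_suffix S0 l x₁, hrep x₁ hx₁ ▸ rep_suffix S0 l' x₁, ?_⟩
    intro x hx
    have hcomp := List.suffix_or_suffix_of_suffix (rep_suffix S0 l x) (rep_suffix S0 l x₁)
    have hxc : rep S0 l x <:+ rep S0 l x₁ := by
      rcases hcomp with h | h
      · exact h
      · have := h.eq_of_length (le_antisymm h.length_le (hmax x hx))
        rw [this]
    constructor
    · exact (lemF (S0 := S0) l (rep S0 l x₁) (rep_suffix S0 l x₁) hxc).symm
    · have hxc' : rep S0 l' x <:+ rep S0 l x₁ := hrep x hx ▸ hxc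
      have := lemF (S0 := S0) l' (rep S0 l x₁) (hrep x₁ hx₁ ▸ rep_suffix S0 l' x₁) hxc'
      exact this.symm


section Params

variable (hMf : IsTypeModel (Phi F) Mf) (hS0 : S0 ∈ Mf)
include hMf hS0

/-- Transfer along the path from an ancestor `c` to `l`, for formulas whose free
variables are all shared along the whole segment. -/
lemma lemT {X : Finset V} :
    ∀ l : List (Set (Formula V Pred ar) × Finset V), Ok F Mf S0 l →
      ∀ c, c <:+ l → (∀ x ∈ X, rep S0 l x = rep S0 c x) →
      ∀ φ ∈ Phi F, (↑(Free φ) : Set V) ⊆ ↑X → (φ ∈ lab S0 l ↔ φ ∈ lab S0 c) := by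
  intro l
  induction l with
  | nil =>
      intro _ c hc _ φ _ _
      rw [List.suffix_nil] at hc; subst hc; exact Iff.rfl
  | cons m l ih =>
      intro hOk c hc hrep φ hφ hFree
      rcases List.suffix_cons_iff.mp hc with rfl | hc
      · exact Iff.rfl
      · have key : ∀ x ∈ X, Formula.dep m.2 x ∈ lab S0 l ∧ rep S0 l x = rep S0 c x := by
          intro x hx
          by_cases hd : Formula.dep m.2 x ∈ lab S0 l
          · refine ⟨hd, ?_⟩
            have := hrep x hx
            rwa [rep, if_pos hd] at this
          · exfalso
            have h1 := hrep x hx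
            rw [rep, if_neg hd] at h1
            have h2 : rep S0 c x <:+ l := (rep_suffix S0 c x).trans hc
            have := h2.length_le
            rw [← h1] at this
            simp at this
        have hXd : (↑X : Set V) ⊆ depClos (lab S0 l) m.2 := by
          intro x hx
          exact (key x (by exact_mod_cast hx)).1
        have step : φ ∈ lab S0 l ↔ φ ∈ lab S0 (m :: l) := by
          have := hOk.2.2.2 φ hφ (hFree.trans hXd)
          exact this
        exact step.symm.trans (ih hOk.1 c hc (fun x hx => (key x hx).2) φ hφ hFree)

/-- If `dep X y` holds at the ancestor `c` and all of `X` is shared from `c` to `l`,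
then `y` is shared as well. -/
lemma lemT2 {X : Finset V} {y : V} :
    ∀ l : List (Set (Formula V Pred ar) × Finset V), Ok F Mf S0 l →
      ∀ c, c <:+ l → (∀ x ∈ X, rep S0 l x = rep S0 c x) →
      Formula.dep X y ∈ Phi F → Formula.dep X y ∈ lab S0 c →
      rep S0 l y = rep S0 c y := by
  intro l
  induction l with
  | nil =>
      intro _ c hc _ _ _
      rw [List.suffix_nil] at hc; subst hc; rfl
  | cons m l ih =>
      intro hOk c hc hrep hPhi hmem
      rcases List.suffix_cons_iff.mp hc with rfl | hc
      · rfl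
      · have key : ∀ x ∈ X, Formula.dep m.2 x ∈ lab S0 l ∧ rep S0 l x = rep S0 c x := by
          intro x hx
          by_cases hd : Formula.dep m.2 x ∈ lab S0 l
          · refine ⟨hd, ?_⟩
            have := hrep x hx
            rwa [rep, if_pos hd] at this
          · exfalso
            have h1 := hrep x hx
            rw [rep, if_neg hd] at h1
            have h2 : rep S0 c x <:+ l := (rep_suffix S0 c x).trans hc
            have := h2.length_le
            rw [← h1] at this
            simp at this
        have hmem' : Formula.dep X y ∈ lab S0 l := by
          have := lemT hMf hS0 l hOk.1 c hc (fun x hx => (key x hx).2)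
            (Formula.dep X y) hPhi (by simp [Free])
          exact this.mpr hmem
        have hHin : IsHintikka (Phi F) (lab S0 l) :=
          hMf.hintikka _ (lab_mem hS0 hOk.1)
        have hy : Formula.dep m.2 y ∈ lab S0 l := by
          refine hHin.trans m.2 X y (fun x hx => (key x hx).1) hmem' ?_
          exact dep_mem_Phi hOk.2.2.1 (dep_Phi hPhi).2
        rw [rep, if_pos hy]
        exact ih hOk.1 c hc (fun x hx => (key x hx).2) hPhi hmem

lemma masterA {X : Finset V} {l l' : List (Set (Formula V Pred ar) × Finset V)}
    (hl : Ok F Mf S0 l) (hl' : Ok F Mf S0 l')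
    (hrep : ∀ x ∈ X, rep S0 l x = rep S0 l' x)
    {φ : Formula V Pred ar} (hφ : φ ∈ Phi F)
    (hFree : (↑(Free φ) : Set V) ⊆ ↑X) : φ ∈ lab S0 l ↔ φ ∈ lab S0 l' := by
  obtain ⟨c, hcl, hcl', hc⟩ := lemU (S0 := S0) hrep
  exact (lemT hMf hS0 l hl c hcl (fun x hx => (hc x hx).1) φ hφ hFree).trans
    (lemT hMf hS0 l' hl' c hcl' (fun x hx => (hc x hx).2) φ hφ hFree).symm

lemma masterB {X : Finset V} {y : V} {l l' : List (Set (Formula V Pred ar) × Finset V)}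
    (hl : Ok F Mf S0 l) (hl' : Ok F Mf S0 l')
    (hrep : ∀ x ∈ X, rep S0 l x = rep S0 l' x)
    (hPhi : Formula.dep X y ∈ Phi F) (hmem : Formula.dep X y ∈ lab S0 l) :
    rep S0 l y = rep S0 l' y := by
  obtain ⟨c, hcl, hcl', hc⟩ := lemU (S0 := S0) hrep
  have hmemc : Formula.dep X y ∈ lab S0 c :=
    (lemT hMf hS0 l hl c hcl (fun x hx => (hc x hx).1) (Formula.dep X y) hPhi
      (by simp [Free])).mp hmem
  rw [lemT2 hMf hS0 l hl c hcl (fun x hx => (hc x hx).1) hPhi hmemc,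
    lemT2 hMf hS0 l' hl' c hcl' (fun x hx => (hc x hx).2) hPhi hmemc]

end Params

end LFDRep

/-- Representation of type models: for every nonempty type model `Mf` for `Φ_F`, there
is a dependence model `M = (O, I, A)` such that `Mf` is exactly the set of `Φ_F`-types
realized at the admissible assignments of `M`. -/
theorem stmt11 {V Pred : Type} [DecidableEq V] {ar : Pred → ℕ}
    (F : Set (Formula V Pred ar)) (hF : F.Finite)
    (Mf : Set (Set (Formula V Pred ar)))
    (hMf : IsTypeModel (Phi F) Mf) (hne : Mf.Nonempty) :
    ∃ (O : Type) (M : DepModel V Pred ar O),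
      Mf = {T | ∃ s ∈ M.A, T = typeOf (Phi F) M s} := by
  classical
  open LFDRep in
  obtain ⟨S0, hS0⟩ := hne
  -- assignments associated to nodes of the tree
  set asg : List (Set (Formula V Pred ar) × Finset V) → V →
      (List (Set (Formula V Pred ar) × Finset V) × V) :=
    fun l x => (rep S0 l x, x) with hasg
  set M : DepModel V Pred ar (List (Set (Formula V Pred ar) × Finset V) × V) :=
    ⟨fun P => {o | ∃ (l : List (Set (Formula V Pred ar) × Finset V)) (x : Fin (ar P) → V),
        Ok F Mf S0 l ∧ Formula.atom P x ∈ lab S0 l ∧ o = fun i => asg l (x i)},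
      {s | ∃ l, Ok F Mf S0 l ∧ s = asg l}⟩ with hM
  have hHin : ∀ {l}, Ok F Mf S0 l → IsHintikka (Phi F) (lab S0 l) :=
    fun hl => hMf.hintikka _ (lab_mem hS0 hl)
  -- the key agreement extraction
  have hagree_rep : ∀ (X : Finset V) (l m : List (Set (Formula V Pred ar) × Finset V)),
      agree (↑X) (asg l) (asg m) → ∀ x ∈ X, rep S0 l x = rep S0 m x := by
    intro X l m h x hx
    have := h x (by exact_mod_cast hx)
    exact congrArg Prod.fst this
  -- shared proof that a child node agrees with its parent on X
  have hchild : ∀ (l : List (Set (Formula V Pred ar) × Finset V))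
      (Δ : Set (Formula V Pred ar)) (X : Finset V), Ok F Mf S0 l →
      (↑X : Set V) ⊆ VF F → (∀ x ∈ X, Formula.dep X x ∈ lab S0 l) →
      agree (↑X) (asg l) (asg ((Δ, X) :: l)) := by
    intro l Δ X hl hXV hproj x hx
    have hx' : x ∈ X := by exact_mod_cast hx
    have : rep S0 ((Δ, X) :: l) x = rep S0 l x := by
      rw [rep, if_pos (hproj x hx')]
    simp only [hasg, this]
  -- truth lemma
  have truth : ∀ (φ : Formula V Pred ar) (l : List (Set (Formula V Pred ar) × Finset V)),
      Ok F Mf S0 l → φ ∈ Phi F → (Sat M φ (asg l) ↔ φ ∈ lab S0 l) := by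
    intro φ
    induction φ with
    | atom P x =>
        intro l hl hφ
        simp only [Sat, hM]
        constructor
        · rintro ⟨m, x', hm, hmem, heq⟩
          have h1 : ∀ i, x' i = x i :=
            fun i => (congrArg Prod.snd (congrFun heq i)).symm
          have hx : ∀ i, rep S0 l (x i) = rep S0 m (x i) := by
            intro i
            have := congrArg Prod.fst (congrFun heq i)
            rw [h1 i] at this
            exact this
          have hx'eq : x' = x := funext h1
          rw [hx'eq] at hmem
          refine (masterA hMf hS0 (X := Finset.univ.image x) hl hm ?_ hφ ?_).mpr hmem
          · intro v hv
            obtain ⟨i, _, rfl⟩ := Finset.mem_image.mp hv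
            exact hx i
          · intro v hv
            exact hv
        · intro hmem
          exact ⟨l, x, hl, hmem, rfl⟩
    | neg ψ ih =>
        intro l hl hφ
        have hψ : ψ ∈ Phi F := neg_Phi hφ
        simp only [Sat]
        rw [ih l hl hψ, (hHin hl).negIff ψ hφ]
    | conj φ ψ ih1 ih2 =>
        intro l hl hφ
        obtain ⟨h1, h2⟩ := conj_Phi hφ
        simp only [Sat]
        rw [ih1 l hl h1, ih2 l hl h2, (hHin hl).conjIff φ ψ hφ]
    | dd X ψ ih =>
        intro l hl hφ
        obtain ⟨hψ, hXV⟩ := dd_Phi hφ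
        have hproj : ∀ Δ ∈ Mf, ∀ x ∈ X, Formula.dep X x ∈ Δ := by
          intro Δ hΔ x hx
          exact (hMf.hintikka Δ hΔ).proj X x hx (dep_mem_Phi hXV (hXV hx))
        constructor
        · intro hSat
          by_contra hnot
          obtain ⟨Δ, hΔ, hψΔ, hsim⟩ := hMf.witness _ (lab_mem hS0 hl) X ψ hφ hnot
          have hOk' : Ok F Mf S0 ((Δ, X) :: l) := ⟨hl, hΔ, hXV, hsim⟩
          have hA : asg ((Δ, X) :: l) ∈ M.A := ⟨(Δ, X) :: l, hOk', rfl⟩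
          have := hSat _ hA (hchild l Δ X hl hXV (fun x hx => hproj _ (lab_mem hS0 hl) x hx))
          rw [ih _ hOk' hψ] at this
          exact hψΔ this
        · intro hmem t ht hag
          obtain ⟨m, hm, rfl⟩ := ht
          have hrep := hagree_rep X l m hag
          have : Formula.dd X ψ ∈ lab S0 m :=
            (masterA hMf hS0 hl hm hrep hφ (by simp [Free])).mp hmem
          exact (ih m hm hψ).mpr ((hHin hm).ddElim X ψ this)
    | dep X y =>
        intro l hl hφ
        obtain ⟨hXV, hyV⟩ := dep_Phi hφ
        have hproj : ∀ x ∈ X, Formula.dep X x ∈ lab S0 l :=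
          fun x hx => (hHin hl).proj X x hx (dep_mem_Phi hXV (hXV hx))
        constructor
        · intro hSat
          by_contra hnot
          have hOk' : Ok F Mf S0 ((lab S0 l, X) :: l) :=
            ⟨hl, lab_mem hS0 hl, hXV, fun ψ _ _ => Iff.rfl⟩
          have hA : asg ((lab S0 l, X) :: l) ∈ M.A := ⟨_, hOk', rfl⟩
          have := hSat _ hA (hchild l (lab S0 l) X hl hXV hproj)
          have heq : rep S0 l y = rep S0 ((lab S0 l, X) :: l) y :=
            congrArg Prod.fst this
          rw [rep, if_neg hnot] at heq
          have := (rep_suffix S0 l y).length_le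
          rw [heq] at this
          simp at this
        · intro hmem t ht hag
          obtain ⟨m, hm, rfl⟩ := ht
          have hrep := hagree_rep X l m hag
          have := masterB hMf hS0 hl hm hrep hφ hmem
          simp only [hasg, this]
  -- conclusion
  refine ⟨_, M, ?_⟩
  have htype : ∀ (l : List (Set (Formula V Pred ar) × Finset V)), Ok F Mf S0 l →
      typeOf (Phi F) M (asg l) = lab S0 l := by
    intro l hl
    ext ψ
    simp only [typeOf, Set.mem_sep_iff]
    constructor
    · rintro ⟨hψ, hsat⟩
      exact (truth ψ l hl hψ).mp hsat
    · intro h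
      have hψ : ψ ∈ Phi F := (hHin hl).subset h
      exact ⟨hψ, (truth ψ l hl hψ).mpr h⟩
  ext T
  constructor
  · intro hT
    have hOk : Ok F Mf S0 [(T, ∅)] :=
      ⟨trivial, hT, by simp, hMf.constants S0 hS0 T hT⟩
    exact ⟨asg [(T, ∅)], ⟨_, hOk, rfl⟩, (htype _ hOk).symm⟩
  · rintro ⟨s, ⟨l, hl, rfl⟩, rfl⟩
    rw [htype l hl]
    exact lab_mem hS0 hl
end

section
/- (Completeness) The Hilbert system LFD is sound and complete for dependence models: an LFD formula φ is provable in the system LFD iff φ is true at every admissible assignment of every dependence model. -/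
namespace LFD

variable {V Pred : Type} {ar : Pred → ℕ}

/-- Material implication `φ → ψ`, defined classically as `¬(φ ∧ ¬ψ)`. -/
def impl (φ ψ : Formula V Pred ar) : Formula V Pred ar :=
  Formula.neg (Formula.conj φ (Formula.neg ψ))

/-- The conjunction `D_X Y ∧ θ`, i.e. the premises `D_X y` (for `y ∈ Y`) conjoined in
front of `θ` (just `θ` if `Y = ∅`); `D_X Y` abbreviates the conjunction of the atoms
`D_X y` for `y ∈ Y`. -/
noncomputable def depPrem (X Y : Finset V) (θ : Formula V Pred ar) : Formula V Pred ar :=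
  (Y.toList.map (fun y => Formula.dep X y)).foldr Formula.conj θ

/-- The Hilbert proof system **LFD**: classical propositional logic (all substitution
instances of propositional tautologies, plus modus ponens), 𝔻-Necessitation,
𝔻-Distribution, 𝔻-Introduction (for `Free(φ) ⊆ X`), 𝔻-Elimination, Projection,
Transitivity `(D_X Y ∧ D_Y Z) → D_X Z` (stated for each `z ∈ Z`), and Transfer
`(D_X Y ∧ 𝔻_Y φ) → 𝔻_X φ`. -/
inductive Provable [DecidableEq V] : Formula V Pred ar → Prop where
  /-- all substitution instances of classical propositional tautologies -/
  | taut (φ : Formula V Pred ar)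
      (h : ∀ v : Formula V Pred ar → Bool,
        (∀ ψ, v (Formula.neg ψ) = !(v ψ)) →
        (∀ ψ χ, v (Formula.conj ψ χ) = (v ψ && v χ)) → v φ = true) :
      Provable φ
  /-- modus ponens -/
  | mp {φ ψ : Formula V Pred ar} : Provable (impl φ ψ) → Provable φ → Provable ψ
  /-- 𝔻-Necessitation -/
  | nec (X : Finset V) {φ : Formula V Pred ar} : Provable φ → Provable (Formula.dd X φ)
  /-- 𝔻-Distribution -/
  | distr (X : Finset V) (φ ψ : Formula V Pred ar) :
      Provable (impl (Formula.dd X (impl φ ψ))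
        (impl (Formula.dd X φ) (Formula.dd X ψ)))
  /-- 𝔻-Introduction, provided `Free(φ) ⊆ X` -/
  | intro (X : Finset V) (φ : Formula V Pred ar) (h : Free φ ⊆ X) :
      Provable (impl φ (Formula.dd X φ))
  /-- 𝔻-Elimination -/
  | elim (X : Finset V) (φ : Formula V Pred ar) : Provable (impl (Formula.dd X φ) φ)
  /-- Projection: `D_X x` for `x ∈ X` -/
  | proj (X : Finset V) (x : V) (h : x ∈ X) : Provable (Formula.dep X x)
  /-- Transitivity: `(D_X Y ∧ D_Y z) → D_X z` -/
  | trans (X Y : Finset V) (z : V) :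
      Provable (impl (depPrem X Y (Formula.dep Y z)) (Formula.dep X z))
  /-- Transfer: `(D_X Y ∧ 𝔻_Y φ) → 𝔻_X φ` -/
  | transfer (X Y : Finset V) (φ : Formula V Pred ar) :
      Provable (impl (depPrem X Y (Formula.dd Y φ)) (Formula.dd X φ))

end LFD


namespace LFD
set_option linter.unusedSectionVars false
variable {V Pred : Type} {ar : Pred → ℕ} [DecidableEq V]

/-! ### Propositional toolkit -/

lemma pTrans {a b c : Formula V Pred ar} (h1 : Provable (impl a b))
    (h2 : Provable (impl b c)) : Provable (impl a c) := by
  have t : Provable (impl (impl a b) (impl (impl b c) (impl a c))) := by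
    apply Provable.taut; intro v hn hc
    simp only [impl, hn, hc]
    cases v a <;> cases v b <;> cases v c <;> rfl
  exact (t.mp h1).mp h2

lemma pId (a : Formula V Pred ar) : Provable (impl a a) := by
  apply Provable.taut; intro v hn hc
  simp only [impl, hn, hc]
  cases v a <;> rfl

lemma pAdd {b : Formula V Pred ar} (a : Formula V Pred ar) (h : Provable b) :
    Provable (impl a b) := by
  have t : Provable (impl b (impl a b)) := by
    apply Provable.taut; intro v hn hc
    simp only [impl, hn, hc]
    cases v a <;> cases v b <;> rfl
  exact t.mp h

lemma pConjL (a b : Formula V Pred ar) : Provable (impl (Formula.conj a b) a) := by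
  apply Provable.taut; intro v hn hc
  simp only [impl, hn, hc]
  cases v a <;> cases v b <;> rfl

lemma pConjR (a b : Formula V Pred ar) : Provable (impl (Formula.conj a b) b) := by
  apply Provable.taut; intro v hn hc
  simp only [impl, hn, hc]
  cases v a <;> cases v b <;> rfl

lemma pConjIntro {c a b : Formula V Pred ar} (h1 : Provable (impl c a))
    (h2 : Provable (impl c b)) : Provable (impl c (Formula.conj a b)) := by
  have t : Provable (impl (impl c a) (impl (impl c b) (impl c (Formula.conj a b)))) := by
    apply Provable.taut; intro v hn hc
    simp only [impl, hn, hc]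
    cases v a <;> cases v b <;> cases v c <;> rfl
  exact (t.mp h1).mp h2

lemma pContra {a b : Formula V Pred ar} (h1 : Provable (impl a b))
    (h2 : Provable (impl a (Formula.neg b))) : Provable (Formula.neg a) := by
  have t : Provable (impl (impl a b) (impl (impl a (Formula.neg b)) (Formula.neg a))) := by
    apply Provable.taut; intro v hn hc
    simp only [impl, hn, hc]
    cases v a <;> cases v b <;> rfl
  exact (t.mp h1).mp h2

lemma pNegConj {a b : Formula V Pred ar} (h : Provable (Formula.neg (Formula.conj a b))) :
    Provable (impl b (Formula.neg a)) := by
  have t : Provable (impl (Formula.neg (Formula.conj a b)) (impl b (Formula.neg a))) := by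
    apply Provable.taut; intro v hn hc
    simp only [impl, hn, hc]
    cases v a <;> cases v b <;> rfl
  exact t.mp h

lemma pDNE {a : Formula V Pred ar} (h : Provable (Formula.neg (Formula.neg a))) :
    Provable a := by
  have t : Provable (impl (Formula.neg (Formula.neg a)) a) := by
    apply Provable.taut; intro v hn hc
    simp only [impl, hn, hc]
    cases v a <;> rfl
  exact t.mp h

lemma pClos {p q C : Formula V Pred ar} (h1 : Provable (impl p q))
    (h2 : Provable (impl C (Formula.neg q))) :
    Provable (Formula.neg (Formula.conj p C)) := by
  have t : Provable (impl (impl p q) (impl (impl C (Formula.neg q))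
      (Formula.neg (Formula.conj p C)))) := by
    apply Provable.taut; intro v hn hc
    simp only [impl, hn, hc]
    cases v p <;> cases v q <;> cases v C <;> rfl
  exact (t.mp h1).mp h2

lemma pConj2 {a b C : Formula V Pred ar} (h : Provable (impl C (Formula.neg (Formula.conj a b)))) :
    Provable (Formula.neg (Formula.conj a (Formula.conj b C))) := by
  have t : Provable (impl (impl C (Formula.neg (Formula.conj a b)))
      (Formula.neg (Formula.conj a (Formula.conj b C)))) := by
    apply Provable.taut; intro v hn hc
    simp only [impl, hn, hc]
    cases v a <;> cases v b <;> cases v C <;> rfl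
  exact t.mp h

/-- `𝔻_X a ∧ 𝔻_X b → 𝔻_X (a∧b)` in curried form. -/
lemma pDDConj (X : Finset V) (a b : Formula V Pred ar) :
    Provable (impl (Formula.dd X a) (impl (Formula.dd X b) (Formula.dd X (Formula.conj a b)))) := by
  have t0 : Provable (impl a (impl b (Formula.conj a b))) := by
    apply Provable.taut; intro v hn hc
    simp only [impl, hn, hc]
    cases v a <;> cases v b <;> rfl
  have t2 : Provable (impl (Formula.dd X a) (Formula.dd X (impl b (Formula.conj a b)))) :=
    (Provable.distr X a (impl b (Formula.conj a b))).mp (Provable.nec X t0)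
  exact pTrans t2 (Provable.distr X b (Formula.conj a b))

end LFD
namespace LFD
set_option linter.unusedSectionVars false
variable {V Pred : Type} {ar : Pred → ℕ} [DecidableEq V]

/-! ### Soundness -/

lemma sat_impl {O : Type} (M : DepModel V Pred ar O) (a b : Formula V Pred ar) (s : V → O) :
    Sat M (impl a b) s ↔ (Sat M a s → Sat M b s) := by
  simp only [impl, Sat]; tauto

lemma agree_mono {O : Type} {X Y : Set V} {s t : V → O} (h : X ⊆ Y) (ha : agree Y s t) :
    agree X s t := fun x hx => ha x (h hx)

lemma sat_agree_iff {O : Type} (M : DepModel V Pred ar O) :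
    ∀ (a : Formula V Pred ar) (s t : V → O), s ∈ M.A → t ∈ M.A →
      agree (↑(Free a)) s t → (Sat M a s ↔ Sat M a t) := by
  intro a
  induction a with
  | atom P x =>
    intro s t hs ht hag
    have : (fun i => s (x i)) = fun i => t (x i) := by
      funext i
      exact hag (x i) (by simp [Free])
    simp only [Sat, this]
  | neg a ih =>
    intro s t hs ht hag
    simp only [Sat]
    exact not_congr (ih s t hs ht hag)
  | conj a b iha ihb =>
    intro s t hs ht hag
    simp only [Sat]
    have hsub : Free (a.conj b) = Free a ∪ Free b := rfl
    have h1 : agree (↑(Free a)) s t :=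
      agree_mono (by rw [hsub, Finset.coe_union]; exact Set.subset_union_left) hag
    have h2 : agree (↑(Free b)) s t :=
      agree_mono (by rw [hsub, Finset.coe_union]; exact Set.subset_union_right) hag
    exact and_congr (iha s t hs ht h1) (ihb s t hs ht h2)
  | dd X a ih =>
    intro s t hs ht hag
    simp only [Sat]
    constructor
    · intro h u hu hagu
      exact h u hu (fun x hx => (hag x hx).trans (hagu x hx))
    · intro h u hu hagu
      exact h u hu (fun x hx => (hag x hx).symm.trans (hagu x hx))
  | dep X y =>
    intro s t hs ht hag
    simp only [Sat]
    have hst : s y = t y → True := fun _ => trivial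
    constructor
    · intro h u hu hagu
      have h1 : s y = t y := h t ht (fun x hx => hag x hx)
      have h2 : s y = u y := h u hu (fun x hx => (hag x hx).trans (hagu x hx))
      exact h1.symm.trans h2
    · intro h u hu hagu
      have h1 : t y = s y := h s hs (fun x hx => (hag x hx).symm)
      have h2 : t y = u y := h u hu (fun x hx => (hag x hx).symm.trans (hagu x hx))
      exact h1.symm.trans h2

lemma sat_depPrem {O : Type} (M : DepModel V Pred ar O) (X Y : Finset V)
    (θ : Formula V Pred ar) (s : V → O) :
    Sat M (depPrem X Y θ) s ↔ ((∀ y ∈ Y, Sat M (Formula.dep X y) s) ∧ Sat M θ s) := by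
  unfold depPrem
  have : ∀ L : List V, Sat M ((L.map (fun y => Formula.dep X y)).foldr Formula.conj θ) s ↔
      ((∀ y ∈ L, Sat M (Formula.dep X y) s) ∧ Sat M θ s) := by
    intro L
    induction L with
    | nil => simp
    | cons y L ih =>
      simp only [List.map_cons, List.foldr_cons, Sat, ih, List.mem_cons]
      constructor
      · rintro ⟨h1, h2, h3⟩
        exact ⟨fun z hz => hz.elim (fun e => e ▸ h1) (h2 z), h3⟩
      · rintro ⟨h1, h2⟩
        exact ⟨h1 y (Or.inl rfl), fun z hz => h1 z (Or.inr hz), h2⟩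
  rw [this]
  simp [Finset.mem_toList]

theorem soundness {φ : Formula V Pred ar} (h : Provable φ) :
    ∀ (O : Type) (M : DepModel V Pred ar O) (s : V → O), s ∈ M.A → Sat M φ s := by
  induction h with
  | taut φ h =>
    intro O M s hs
    classical
    have hv := h (fun ψ => if Sat M ψ s then true else false)
      (by intro ψ; by_cases hψ : Sat M ψ s <;> simp [Sat, hψ])
      (by intro ψ χ; by_cases h1 : Sat M ψ s <;> by_cases h2 : Sat M χ s <;> simp [Sat, h1, h2])
    by_cases hφ : Sat M φ s
    · exact hφ
    · simp [hφ] at hv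
  | mp h1 h2 ih1 ih2 =>
    intro O M s hs
    exact (sat_impl M _ _ s).1 (ih1 O M s hs) (ih2 O M s hs)
  | nec X h ih =>
    intro O M s hs
    show ∀ t ∈ M.A, agree _ s t → Sat M _ t
    intro t ht _
    exact ih O M t ht
  | distr X a b =>
    intro O M s hs
    rw [sat_impl]
    intro h1
    rw [sat_impl]
    intro h2
    intro t ht hag
    exact (sat_impl M a b t).1 (h1 t ht hag) (h2 t ht hag)
  | intro X a hfree =>
    intro O M s hs
    rw [sat_impl]
    intro ha t ht hag
    exact (sat_agree_iff M a s t hs ht (agree_mono (by exact_mod_cast hfree) hag)).1 ha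
  | elim X a =>
    intro O M s hs
    rw [sat_impl]
    intro h
    exact h s hs (fun x _ => rfl)
  | proj X x hx =>
    intro O M s hs
    intro t ht hag
    exact hag x hx
  | trans X Y z =>
    intro O M s hs
    rw [sat_impl]
    intro h
    obtain ⟨hdeps, hdz⟩ := (sat_depPrem M X Y _ s).1 h
    intro t ht hag
    exact hdz t ht (fun y hy => hdeps y hy t ht hag)
  | transfer X Y a =>
    intro O M s hs
    rw [sat_impl]
    intro h
    obtain ⟨hdeps, hdd⟩ := (sat_depPrem M X Y _ s).1 h
    intro t ht hag
    exact hdd t ht (fun y hy => hdeps y hy t ht hag)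

end LFD
namespace LFD
set_option linter.unusedSectionVars false
variable {V Pred : Type} {ar : Pred → ℕ} [DecidableEq V]

/-! ### Consistency and maximal consistent sets -/

/-- Conjunction of a list of formulas, terminated by a fixed provable formula `τ`. -/
def conjL (τ : Formula V Pred ar) : List (Formula V Pred ar) → Formula V Pred ar
  | [] => τ
  | a :: L => Formula.conj a (conjL τ L)

variable (τ : Formula V Pred ar)

/-- Consistency of a set of formulas. -/
def Con (Γ : Set (Formula V Pred ar)) : Prop :=
  ¬ ∃ L : List (Formula V Pred ar), (∀ ψ ∈ L, ψ ∈ Γ) ∧ Provable (Formula.neg (conjL τ L))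

/-- Maximal consistent set. -/
def MCS (Γ : Set (Formula V Pred ar)) : Prop :=
  Con τ Γ ∧ ∀ ψ, ψ ∉ Γ → ¬ Con τ (insert ψ Γ)

variable {τ}

lemma conjL_mem {L : List (Formula V Pred ar)} {ψ : Formula V Pred ar} (h : ψ ∈ L) :
    Provable (impl (conjL τ L) ψ) := by
  induction L with
  | nil => exact absurd h List.not_mem_nil
  | cons a L ih =>
    rcases List.mem_cons.1 h with rfl | h'
    · exact pConjL _ _
    · exact pTrans (pConjR a (conjL τ L)) (ih h')

lemma conjL_intro (hτ : Provable τ) {C : Formula V Pred ar} :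
    ∀ {L : List (Formula V Pred ar)}, (∀ ψ ∈ L, Provable (impl C ψ)) →
      Provable (impl C (conjL τ L)) := by
  intro L
  induction L with
  | nil => exact fun _ => pAdd C hτ
  | cons a L ih =>
    intro h
    exact pConjIntro (h a List.mem_cons_self)
      (ih (fun ψ hψ => h ψ (List.mem_cons_of_mem a hψ)))

lemma Con.mono {Γ Δ : Set (Formula V Pred ar)} (hsub : Γ ⊆ Δ) (h : Con τ Δ) : Con τ Γ := by
  rintro ⟨L, hL, hp⟩
  exact h ⟨L, fun ψ hψ => hsub (hL ψ hψ), hp⟩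

/-- From inconsistency of `insert ψ Γ`, extract a list from `Γ` refuting `ψ`. -/
lemma insert_not_con (hτ : Provable τ) {Γ : Set (Formula V Pred ar)} {ψ : Formula V Pred ar}
    (h : ¬ Con τ (insert ψ Γ)) :
    ∃ L, (∀ χ ∈ L, χ ∈ Γ) ∧ Provable (impl (conjL τ L) (Formula.neg ψ)) := by
  classical
  rw [Con, not_not] at h
  obtain ⟨L', hL', hp⟩ := h
  refine ⟨L'.filter (fun χ => χ ≠ ψ), ?_, ?_⟩
  · intro χ hχ
    rw [List.mem_filter] at hχ
    have := hL' χ hχ.1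
    rcases this with h1 | h1
    · exact absurd h1 (by simpa using hχ.2)
    · exact h1
  · set L := L'.filter (fun χ => χ ≠ ψ) with hLdef
    set C := Formula.conj ψ (conjL τ L) with hCdef
    have hall : ∀ χ ∈ L', Provable (impl C χ) := by
      intro χ hχ
      by_cases he : χ = ψ
      · subst he; exact pConjL _ _
      · have : χ ∈ L := by
          rw [hLdef, List.mem_filter]
          exact ⟨hχ, by simpa using he⟩
        exact pTrans (pConjR ψ (conjL τ L)) (conjL_mem this)
    have h1 : Provable (impl C (conjL τ L')) := conjL_intro hτ hall
    have h2 : Provable (Formula.neg C) :=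
      pContra h1 (pAdd C hp)
    -- `neg C = neg (conj ψ A)` gives `impl A (neg ψ)`
    exact pNegConj h2

lemma chain_list {c : Set (Set (Formula V Pred ar))} (hchain : IsChain (· ⊆ ·) c)
    (hne : c.Nonempty) :
    ∀ L : List (Formula V Pred ar), (∀ ψ ∈ L, ψ ∈ ⋃₀ c) → ∃ S ∈ c, ∀ ψ ∈ L, ψ ∈ S := by
  intro L
  induction L with
  | nil => exact fun _ => ⟨hne.choose, hne.choose_spec, by simp⟩
  | cons a L ih =>
    intro h
    obtain ⟨S, hS, hSL⟩ := ih (fun ψ hψ => h ψ (List.mem_cons_of_mem a hψ))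
    obtain ⟨T, hT, haT⟩ := h a List.mem_cons_self
    rcases eq_or_ne S T with rfl | hne'
    · exact ⟨S, hS, fun ψ hψ => by
        rcases List.mem_cons.1 hψ with rfl | h' <;> [exact haT; exact hSL ψ h']⟩
    · rcases hchain hS hT hne' with hsub | hsub
      · exact ⟨T, hT, fun ψ hψ => by
          rcases List.mem_cons.1 hψ with rfl | h' <;> [exact haT; exact hsub (hSL ψ h')]⟩
      · exact ⟨S, hS, fun ψ hψ => by
          rcases List.mem_cons.1 hψ with rfl | h' <;> [exact hsub haT; exact hSL ψ h']⟩

lemma lindenbaum {Γ : Set (Formula V Pred ar)} (h : Con τ Γ) :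
    ∃ Δ, Γ ⊆ Δ ∧ MCS τ Δ := by
  obtain ⟨Δ, hΔ⟩ := zorn_subset_nonempty {Δ | Con τ Δ ∧ Γ ⊆ Δ}
    (fun c hc hchain hne => by
      refine ⟨⋃₀ c, ⟨?_, ?_⟩, fun S hS => Set.subset_sUnion_of_mem hS⟩
      · rintro ⟨L, hL, hp⟩
        obtain ⟨S, hS, hSL⟩ := chain_list hchain hne L hL
        exact (hc hS).1 ⟨L, hSL, hp⟩
      · obtain ⟨S, hS⟩ := hne
        exact (hc hS).2.trans (Set.subset_sUnion_of_mem hS))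
    Γ ⟨h, subset_rfl⟩
  refine ⟨Δ, hΔ.1, hΔ.2.1.1, fun ψ hψ hcon => hψ ?_⟩
  have heq := hΔ.2.eq_of_ge (y := insert ψ Δ)
    ⟨hcon, hΔ.2.1.2.trans (Set.subset_insert _ _)⟩ (Set.subset_insert _ _)
  rw [← heq]
  exact Set.mem_insert _ _

/-! ### Properties of MCS -/

variable {Γ : Set (Formula V Pred ar)}

lemma MCS.con (hΓ : MCS τ Γ) : Con τ Γ := hΓ.1

lemma MCS.not_both (hΓ : MCS τ Γ) {ψ : Formula V Pred ar} (h1 : ψ ∈ Γ)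
    (h2 : Formula.neg ψ ∈ Γ) : False := by
  apply hΓ.1
  refine ⟨[ψ, Formula.neg ψ], by
    intro χ hχ; simp only [List.mem_cons, List.not_mem_nil, or_false] at hχ
    rcases hχ with rfl | rfl <;> assumption, ?_⟩
  apply Provable.taut; intro v hn hc
  simp only [conjL, hn, hc]
  cases v ψ <;> cases v τ <;> rfl

lemma MCS.clos (hτ : Provable τ) (hΓ : MCS τ Γ) {ψ χ : Formula V Pred ar} (h : ψ ∈ Γ)
    (hp : Provable (impl ψ χ)) : χ ∈ Γ := by
  by_contra hχ
  obtain ⟨L, hL, himp⟩ := insert_not_con hτ (hΓ.2 χ hχ)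
  apply hΓ.1
  refine ⟨ψ :: L, ?_, pClos hp himp⟩
  intro a ha
  rcases List.mem_cons.1 ha with rfl | h'
  · exact h
  · exact hL a h'

lemma MCS.mem_of_provable (hτ : Provable τ) (hΓ : MCS τ Γ) {ψ : Formula V Pred ar}
    (h : Provable ψ) : ψ ∈ Γ := by
  by_contra hψ
  obtain ⟨L, hL, himp⟩ := insert_not_con hτ (hΓ.2 ψ hψ)
  apply hΓ.1
  refine ⟨L, hL, pContra (pAdd _ h) himp⟩

lemma MCS.neg_mem (hτ : Provable τ) (hΓ : MCS τ Γ) {ψ : Formula V Pred ar} (h : ψ ∉ Γ) :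
    Formula.neg ψ ∈ Γ := by
  by_contra hn
  obtain ⟨L1, hL1, h1⟩ := insert_not_con hτ (hΓ.2 ψ h)
  obtain ⟨L2, hL2, h2⟩ := insert_not_con hτ (hΓ.2 (Formula.neg ψ) hn)
  apply hΓ.1
  refine ⟨L1 ++ L2, ?_, ?_⟩
  · intro a ha
    rcases List.mem_append.1 ha with h' | h'
    · exact hL1 a h'
    · exact hL2 a h'
  have e1 : Provable (impl (conjL τ (L1 ++ L2)) (conjL τ L1)) :=
    conjL_intro hτ (fun a ha => conjL_mem (List.mem_append_left _ ha))
  have e2 : Provable (impl (conjL τ (L1 ++ L2)) (conjL τ L2)) :=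
    conjL_intro hτ (fun a ha => conjL_mem (List.mem_append_right _ ha))
  exact pContra (pTrans e1 h1) (pTrans e2 h2)

lemma MCS.mem_or_neg (hτ : Provable τ) (hΓ : MCS τ Γ) (ψ : Formula V Pred ar) :
    ψ ∈ Γ ∨ Formula.neg ψ ∈ Γ := by
  by_cases h : ψ ∈ Γ
  · exact Or.inl h
  · exact Or.inr (hΓ.neg_mem hτ h)

lemma MCS.neg_mem_iff (hτ : Provable τ) (hΓ : MCS τ Γ) {ψ : Formula V Pred ar} :
    Formula.neg ψ ∈ Γ ↔ ψ ∉ Γ :=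
  ⟨fun h hm => hΓ.not_both hm h, hΓ.neg_mem hτ⟩

lemma MCS.conj_mem (hτ : Provable τ) (hΓ : MCS τ Γ) {a b : Formula V Pred ar}
    (ha : a ∈ Γ) (hb : b ∈ Γ) : Formula.conj a b ∈ Γ := by
  by_contra h
  obtain ⟨L, hL, himp⟩ := insert_not_con hτ (hΓ.2 _ h)
  apply hΓ.1
  refine ⟨a :: b :: L, ?_, pConj2 himp⟩
  intro x hx
  simp only [List.mem_cons] at hx
  rcases hx with rfl | rfl | h'
  · exact ha
  · exact hb
  · exact hL x h'

lemma MCS.conj_mem_iff (hτ : Provable τ) (hΓ : MCS τ Γ) {a b : Formula V Pred ar} :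
    Formula.conj a b ∈ Γ ↔ a ∈ Γ ∧ b ∈ Γ := by
  constructor
  · intro h
    exact ⟨hΓ.clos hτ h (pConjL a b), hΓ.clos hτ h (pConjR a b)⟩
  · intro ⟨ha, hb⟩
    exact hΓ.conj_mem hτ ha hb

lemma MCS.mp_mem (hτ : Provable τ) (hΓ : MCS τ Γ) {a b : Formula V Pred ar}
    (h : impl a b ∈ Γ) (ha : a ∈ Γ) : b ∈ Γ := by
  by_cases hb : b ∈ Γ
  · exact hb
  · have : Formula.conj a (Formula.neg b) ∈ Γ := hΓ.conj_mem hτ ha (hΓ.neg_mem hτ hb)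
    exact absurd h (fun h => hΓ.not_both this h)

lemma MCS.foldr_mem (hτ : Provable τ) (hΓ : MCS τ Γ) {l : List (Formula V Pred ar)}
    {θ : Formula V Pred ar} (hl : ∀ a ∈ l, a ∈ Γ) (hθ : θ ∈ Γ) :
    l.foldr Formula.conj θ ∈ Γ := by
  induction l with
  | nil => exact hθ
  | cons a l ih =>
    exact hΓ.conj_mem hτ (hl a List.mem_cons_self)
      (ih (fun b hb => hl b (List.mem_cons_of_mem a hb)))

end LFD
namespace LFD
set_option linter.unusedSectionVars false
variable {V Pred : Type} {ar : Pred → ℕ} [DecidableEq V]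
variable (τ : Formula V Pred ar)

/-! ### Canonical worlds and accessibility -/

/-- Worlds of the canonical model: maximal consistent sets. -/
def Wld : Type := {Γ : Set (Formula V Pred ar) // MCS τ Γ}

/-- Canonical accessibility: `Δ` realizes all `𝔻_X`-consequences of `Γ`. -/
def rel (X : Finset V) (Γ Δ : Wld τ) : Prop :=
  ∀ ψ, Formula.dd X ψ ∈ Γ.1 → ψ ∈ Δ.1

variable {τ}
variable (hτ : Provable τ)
include hτ

lemma depPrem_mem {Γ : Set (Formula V Pred ar)} (hΓ : MCS τ Γ) {X' X : Finset V}
    {θ : Formula V Pred ar} (hdep : ∀ x ∈ X, Formula.dep X' x ∈ Γ) (hθ : θ ∈ Γ) :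
    depPrem X' X θ ∈ Γ := by
  apply hΓ.foldr_mem hτ _ hθ
  intro a ha
  rw [List.mem_map] at ha
  obtain ⟨y, hy, rfl⟩ := ha
  exact hdep y (Finset.mem_toList.1 hy)

/-- Transitivity inside an MCS: if `D_{X'} X ⊆ Γ` and `D_X y ∈ Γ` then `D_{X'} y ∈ Γ`. -/
lemma dep_trans_mem {Γ : Set (Formula V Pred ar)} (hΓ : MCS τ Γ) {X' X : Finset V} {y : V}
    (hdep : ∀ x ∈ X, Formula.dep X' x ∈ Γ) (hy : Formula.dep X y ∈ Γ) :
    Formula.dep X' y ∈ Γ := by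
  have hmem : depPrem X' X (Formula.dep X y) ∈ Γ := depPrem_mem hτ hΓ hdep hy
  exact hΓ.mp_mem hτ (hΓ.mem_of_provable hτ (Provable.trans X' X y)) hmem

lemma rel_refl (X : Finset V) (Γ : Wld τ) : rel τ X Γ Γ :=
  fun ψ h => Γ.2.clos hτ h (Provable.elim X ψ)

lemma rel_symm {X : Finset V} {Γ Δ : Wld τ} (h : rel τ X Γ Δ) : rel τ X Δ Γ := by
  intro ψ hψ
  by_contra hn
  have h1 : Formula.neg ψ ∈ Γ.1 := Γ.2.neg_mem hτ hn
  have h2 : Formula.neg (Formula.dd X ψ) ∈ Γ.1 := by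
    refine Γ.2.clos hτ h1 ?_
    -- ⊢ ¬ψ → ¬𝔻_X ψ  from  𝔻_X ψ → ψ
    have t : Provable (impl (impl (Formula.dd X ψ) ψ)
        (impl (Formula.neg ψ) (Formula.neg (Formula.dd X ψ)))) := by
      apply Provable.taut; intro v hn' hc
      simp only [impl, hn', hc]
      cases v (Formula.dd X ψ) <;> cases v ψ <;> rfl
    exact t.mp (Provable.elim X ψ)
  have h3 : Formula.dd X (Formula.neg (Formula.dd X ψ)) ∈ Γ.1 :=
    Γ.2.clos hτ h2 (Provable.intro X _ (by simp [Free]))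
  exact Δ.2.not_both hψ (h _ h3)

lemma rel_trans {X : Finset V} {Γ Δ Θ : Wld τ} (h1 : rel τ X Γ Δ) (h2 : rel τ X Δ Θ) :
    rel τ X Γ Θ := by
  intro ψ hψ
  have : Formula.dd X (Formula.dd X ψ) ∈ Γ.1 :=
    Γ.2.clos hτ hψ (Provable.intro X _ (by simp [Free]))
  exact h2 ψ (h1 _ this)

/-- Transfer: if `D_{X'} X ⊆ Γ` and `Γ ∼_{X'} Δ` then `Γ ∼_X Δ`. -/
lemma rel_mono {X' X : Finset V} {Γ Δ : Wld τ}
    (hdep : ∀ x ∈ X, Formula.dep X' x ∈ Γ.1) (hr : rel τ X' Γ Δ) : rel τ X Γ Δ := by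
  intro ψ hψ
  have hmem : depPrem X' X (Formula.dd X ψ) ∈ Γ.1 := depPrem_mem hτ Γ.2 hdep hψ
  have : Formula.dd X' ψ ∈ Γ.1 :=
    Γ.2.mp_mem hτ (Γ.2.mem_of_provable hτ (Provable.transfer X' X ψ)) hmem
  exact hr ψ this

/-- Transfer of formulas whose free variables are inside `X` along `∼_X`. -/
lemma rel_free {X : Finset V} {Γ Δ : Wld τ} (hr : rel τ X Γ Δ) {ψ : Formula V Pred ar}
    (hψ : ψ ∈ Γ.1) (hfree : Free ψ ⊆ X) : ψ ∈ Δ.1 :=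
  hr ψ (Γ.2.clos hτ hψ (Provable.intro X ψ hfree))

lemma dd_conjL_mem {Γ : Set (Formula V Pred ar)} (hΓ : MCS τ Γ) (X : Finset V) :
    ∀ {L : List (Formula V Pred ar)}, (∀ χ ∈ L, Formula.dd X χ ∈ Γ) →
      Formula.dd X (conjL τ L) ∈ Γ := by
  intro L
  induction L with
  | nil => exact fun _ => hΓ.mem_of_provable hτ (Provable.nec X hτ)
  | cons a L' ih =>
    intro h
    have ha : Formula.dd X a ∈ Γ := h a List.mem_cons_self
    have hrest : Formula.dd X (conjL τ L') ∈ Γ :=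
      ih (fun χ hχ => h χ (List.mem_cons_of_mem a hχ))
    have := hΓ.mp_mem hτ (hΓ.mem_of_provable hτ (pDDConj X a (conjL τ L'))) ha
    exact hΓ.mp_mem hτ this hrest

/-- Existence lemma: a `¬𝔻_X ψ` world has an `∼_X`-successor refuting `ψ`. -/
lemma exists_succ {X : Finset V} {Γ : Wld τ} {ψ : Formula V Pred ar}
    (h : Formula.neg (Formula.dd X ψ) ∈ Γ.1) :
    ∃ Δ : Wld τ, rel τ X Γ Δ ∧ Formula.neg ψ ∈ Δ.1 := by
  classical
  set S : Set (Formula V Pred ar) := {χ | Formula.dd X χ ∈ Γ.1} ∪ {Formula.neg ψ} with hS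
  have hcon : Con τ S := by
    rintro ⟨L, hL, hp⟩
    set L1 := L.filter (fun χ => χ ≠ Formula.neg ψ) with hL1def
    have hL1 : ∀ χ ∈ L1, Formula.dd X χ ∈ Γ.1 := by
      intro χ hχ
      rw [hL1def, List.mem_filter] at hχ
      rcases hL χ hχ.1 with h' | h'
      · exact h'
      · exact absurd h' (by simpa using hχ.2)
    set C := Formula.conj (conjL τ L1) (Formula.neg ψ) with hCdef
    have hall : ∀ χ ∈ L, Provable (impl C χ) := by
      intro χ hχ
      by_cases he : χ = Formula.neg ψ
      · subst he; exact pConjR _ _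
      · have : χ ∈ L1 := by
          rw [hL1def, List.mem_filter]
          exact ⟨hχ, by simpa using he⟩
        exact pTrans (pConjL _ _) (conjL_mem this)
    have h1 : Provable (impl C (conjL τ L)) := conjL_intro hτ hall
    have h2 : Provable (Formula.neg C) := pContra h1 (pAdd C hp)
    -- `neg C = impl (conjL τ L1) ψ` definitionally? No: impl a b = neg (conj a (neg b)).
    -- Here C = conj (conjL τ L1) (neg ψ), so neg C = impl (conjL τ L1) ψ. Yes!
    have h3 : Provable (impl (conjL τ L1) ψ) := h2
    have h4 : Provable (impl (Formula.dd X (conjL τ L1)) (Formula.dd X ψ)) :=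
      (Provable.distr X _ _).mp (Provable.nec X h3)
    have h5 : Formula.dd X (conjL τ L1) ∈ Γ.1 := dd_conjL_mem hτ Γ.2 X hL1
    have h6 : Formula.dd X ψ ∈ Γ.1 :=
      Γ.2.mp_mem hτ (Γ.2.mem_of_provable hτ h4) h5
    exact Γ.2.not_both h6 h
  obtain ⟨Δ, hsub, hΔ⟩ := lindenbaum hcon
  refine ⟨⟨Δ, hΔ⟩, ?_, ?_⟩
  · intro χ hχ
    exact hsub (Or.inl hχ)
  · exact hsub (Or.inr rfl)

end LFD
namespace LFD
set_option linter.unusedSectionVars false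
variable {V Pred : Type} {ar : Pred → ℕ} [DecidableEq V]
variable (τ : Formula V Pred ar) (w₀ : Wld τ)

/-! ### Paths in the canonical model

A path is a list of steps `(X, Δ)` (most recent step first), starting from the
fixed root world `w₀`. -/

/-- The last world of a path. -/
def plast : List (Finset V × Wld τ) → Wld τ
  | [] => w₀
  | p :: _ => p.2

/-- Validity of a path: each step `(X, Δ)` requires `∼_X` between consecutive worlds. -/
def PValid : List (Finset V × Wld τ) → Prop
  | [] => True
  | p :: t => PValid t ∧ rel τ p.1 (plast τ w₀ t) p.2

open Classical in
/-- The value of variable `x` at path `H`: the suffix of `H` at which `x` was last reset. -/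
noncomputable def pval (x : V) : List (Finset V × Wld τ) → List (Finset V × Wld τ)
  | [] => []
  | p :: t => if Formula.dep p.1 x ∈ (plast τ w₀ t).1 then pval x t else p :: t

open Classical in
/-- Simultaneous truncation for a finite set of variables. -/
noncomputable def pvalS (X : Finset V) : List (Finset V × Wld τ) → List (Finset V × Wld τ)
  | [] => []
  | p :: t => if ∀ x ∈ X, Formula.dep p.1 x ∈ (plast τ w₀ t).1 then pvalS X t else p :: t

/-- The canonical assignment associated with a path. -/
noncomputable def asn (H : List (Finset V × Wld τ)) : V → List (Finset V × Wld τ) × V :=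
  fun x => (pval τ w₀ x H, x)

/-- The canonical dependence model over root `w₀`. -/
noncomputable def canon : DepModel V Pred ar (List (Finset V × Wld τ) × V) where
  I P := {f | ∃ H, ∃ z : Fin (ar P) → V, PValid τ w₀ H ∧
    (∀ i, f i = (pval τ w₀ (z i) H, z i)) ∧ Formula.atom P z ∈ (plast τ w₀ H).1}
  A := {s | ∃ H, PValid τ w₀ H ∧ s = asn τ w₀ H}

variable {τ w₀}

lemma pval_suffix (x : V) : ∀ H : List (Finset V × Wld τ), pval τ w₀ x H <:+ H := by
  intro H
  induction H with
  | nil => exact List.suffix_rfl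
  | cons p t ih =>
    rw [pval]
    split
    · exact ih.trans (List.suffix_cons p t)
    · exact List.suffix_rfl

lemma pvalS_suffix (X : Finset V) : ∀ H : List (Finset V × Wld τ), pvalS τ w₀ X H <:+ H := by
  intro H
  induction H with
  | nil => exact List.suffix_rfl
  | cons p t ih =>
    rw [pvalS]
    split
    · exact ih.trans (List.suffix_cons p t)
    · exact List.suffix_rfl

lemma PValid.suffix : ∀ {H H' : List (Finset V × Wld τ)}, H' <:+ H → PValid τ w₀ H →
    PValid τ w₀ H' := by
  intro H
  induction H with
  | nil => intro H' h hH; rw [List.suffix_nil.1 h]; trivial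
  | cons p t ih =>
    intro H' h hH
    rcases List.suffix_cons_iff.1 h with rfl | h'
    · exact hH
    · exact ih h' hH.1

variable (hτ : Provable τ)
include hτ

/-- Along the truncation, the last world stays `∼_X`-related. -/
lemma rel_pvalS (X : Finset V) :
    ∀ H : List (Finset V × Wld τ), PValid τ w₀ H →
      rel τ X (plast τ w₀ (pvalS τ w₀ X H)) (plast τ w₀ H) := by
  intro H
  induction H with
  | nil => intro _; rw [pvalS]; exact rel_refl hτ X w₀
  | cons p t ih =>
    intro hv
    rw [pvalS]
    split
    · rename_i hpres
      have h1 : rel τ X (plast τ w₀ (pvalS τ w₀ X t)) (plast τ w₀ t) := ih hv.1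
      have h2 : rel τ X (plast τ w₀ t) p.2 := rel_mono hτ hpres hv.2
      exact rel_trans hτ h1 (show rel τ X (plast τ w₀ t) (plast τ w₀ (p :: t)) from h2)
    · exact rel_refl hτ X _

omit hτ

lemma pval_suffix_pvalS {X : Finset V} {x : V} (hx : x ∈ X) :
    ∀ H : List (Finset V × Wld τ), pval τ w₀ x H <:+ pvalS τ w₀ X H := by
  intro H
  induction H with
  | nil => rw [pval, pvalS]
  | cons p t ih =>
    rw [pval, pvalS]
    by_cases hpres : ∀ x ∈ X, Formula.dep p.1 x ∈ (plast τ w₀ t).1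
    · rw [if_pos hpres, if_pos (hpres x hx)]
      exact ih
    · rw [if_neg hpres]
      by_cases hd : Formula.dep p.1 x ∈ (plast τ w₀ t).1
      · rw [if_pos hd]
        exact (pval_suffix x t).trans (List.suffix_cons p t)
      · rw [if_neg hd]

lemma pvalS_eq_pval {X : Finset V} (hX : X.Nonempty) :
    ∀ H : List (Finset V × Wld τ), ∃ x ∈ X, pvalS τ w₀ X H = pval τ w₀ x H := by
  intro H
  induction H with
  | nil => exact ⟨hX.choose, hX.choose_spec, by rw [pval, pvalS]⟩
  | cons p t ih =>
    rw [pvalS]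
    split
    · rename_i hpres
      obtain ⟨x, hx, he⟩ := ih
      exact ⟨x, hx, by rw [pval, if_pos (hpres x hx)]; exact he⟩
    · rename_i hpres
      push_neg at hpres
      obtain ⟨x, hx, hnd⟩ := hpres
      exact ⟨x, hx, by rw [pval, if_neg hnd]⟩

lemma pvalS_empty : ∀ H : List (Finset V × Wld τ), pvalS τ w₀ ∅ H = [] := by
  intro H
  induction H with
  | nil => rw [pvalS]
  | cons p t ih =>
    rw [pvalS, if_pos (by simp)]
    exact ih

lemma pvalS_congr {X : Finset V} {H G : List (Finset V × Wld τ)}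
    (h : ∀ x ∈ X, pval τ w₀ x H = pval τ w₀ x G) :
    pvalS τ w₀ X H = pvalS τ w₀ X G := by
  rcases Finset.eq_empty_or_nonempty X with rfl | hX
  · rw [pvalS_empty, pvalS_empty]
  · obtain ⟨x, hx, hxe⟩ := pvalS_eq_pval hX H
    obtain ⟨y, hy, hye⟩ := pvalS_eq_pval hX G
    have h1 : pvalS τ w₀ X H <:+ pvalS τ w₀ X G := by
      rw [hxe, h x hx]
      exact pval_suffix_pvalS hx G
    have h2 : pvalS τ w₀ X G <:+ pvalS τ w₀ X H := by
      rw [hye, ← h y hy]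
      exact pval_suffix_pvalS hy H
    exact h1.eq_of_length (le_antisymm h1.length_le h2.length_le)

include hτ

/-- Key agreement lemma: if two valid paths agree (as assignments) on all
variables of `X`, their last worlds are `∼_X`-related. -/
lemma rel_of_agree {X : Finset V} {H G : List (Finset V × Wld τ)}
    (hH : PValid τ w₀ H) (hG : PValid τ w₀ G)
    (h : ∀ x ∈ X, pval τ w₀ x H = pval τ w₀ x G) :
    rel τ X (plast τ w₀ H) (plast τ w₀ G) := by
  have e : pvalS τ w₀ X H = pvalS τ w₀ X G := pvalS_congr h
  have r1 := rel_pvalS hτ X H hH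
  have r2 := rel_pvalS hτ X G hG
  rw [e] at r1
  exact rel_trans hτ (rel_symm hτ r1) r2

/-- If `D_X y` holds at the truncation point, the value of `y` is already fixed there. -/
lemma pval_eq_of_dep {X : Finset V} {y : V} :
    ∀ H : List (Finset V × Wld τ), PValid τ w₀ H →
      Formula.dep X y ∈ (plast τ w₀ (pvalS τ w₀ X H)).1 →
      pval τ w₀ y H = pval τ w₀ y (pvalS τ w₀ X H) := by
  intro H
  induction H with
  | nil => intro _ _; rw [pvalS]
  | cons p t ih =>
    intro hv hd
    rw [pvalS] at hd ⊢
    by_cases hpres : ∀ x ∈ X, Formula.dep p.1 x ∈ (plast τ w₀ t).1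
    · rw [if_pos hpres] at hd ⊢
      have hdt : Formula.dep X y ∈ (plast τ w₀ t).1 := by
        have := rel_pvalS hτ X t hv.1
        exact rel_free hτ this hd subset_rfl
      have hdy : Formula.dep p.1 y ∈ (plast τ w₀ t).1 :=
        dep_trans_mem hτ (plast τ w₀ t).2 hpres hdt
      rw [pval, if_pos hdy]
      exact ih hv.1 hd
    · rw [if_neg hpres]

end LFD
namespace LFD
set_option linter.unusedSectionVars false
variable {V Pred : Type} {ar : Pred → ℕ} [DecidableEq V]
variable {τ : Formula V Pred ar}

/-! ### The truth lemma -/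

theorem truth_lemma (hτ : Provable τ) (w₀ : Wld τ) (a : Formula V Pred ar) :
    ∀ H, PValid τ w₀ H → (Sat (canon τ w₀) a (asn τ w₀ H) ↔ a ∈ (plast τ w₀ H).1) := by
  induction a with
  | atom P z =>
    intro H hH
    show (fun i => asn τ w₀ H (z i)) ∈ (canon τ w₀).I P ↔ _
    constructor
    · rintro ⟨H', z', hH', hvals, hmem⟩
      have hz : ∀ i, z' i = z i ∧ pval τ w₀ (z i) H = pval τ w₀ (z' i) H' := by
        intro i
        have := hvals i
        simp only [asn, Prod.mk.injEq] at this
        exact ⟨this.2.symm, this.1⟩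
      have hze : z' = z := funext fun i => (hz i).1
      subst hze
      have hagree : ∀ x ∈ Finset.univ.image z', pval τ w₀ x H' = pval τ w₀ x H := by
        intro x hx
        rw [Finset.mem_image] at hx
        obtain ⟨i, _, rfl⟩ := hx
        exact ((hz i).2).symm
      have hrel := rel_of_agree hτ hH' hH hagree
      exact rel_free hτ hrel hmem subset_rfl
    · intro hmem
      exact ⟨H, z, hH, fun i => rfl, hmem⟩
  | neg a ih =>
    intro H hH
    show (¬ Sat _ a _) ↔ _
    rw [ih H hH]
    exact ((plast τ w₀ H).2.neg_mem_iff hτ).symm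
  | conj a b iha ihb =>
    intro H hH
    show (Sat _ a _ ∧ Sat _ b _) ↔ _
    rw [iha H hH, ihb H hH]
    exact ((plast τ w₀ H).2.conj_mem_iff hτ).symm
  | dd X a ih =>
    intro H hH
    show (∀ t ∈ (canon τ w₀).A, agree (↑X) (asn τ w₀ H) t → Sat _ a t) ↔ _
    constructor
    · intro hsat
      by_contra hmem
      have hneg : Formula.neg (Formula.dd X a) ∈ (plast τ w₀ H).1 :=
        (plast τ w₀ H).2.neg_mem hτ hmem
      obtain ⟨Δ, hrel, hna⟩ := exists_succ hτ hneg
      set G : List (Finset V × Wld τ) := (X, Δ) :: H with hGdef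
      have hvG : PValid τ w₀ G := ⟨hH, hrel⟩
      have hagree : agree (↑X) (asn τ w₀ H) (asn τ w₀ G) := by
        intro x hx
        have hproj : Formula.dep X x ∈ (plast τ w₀ H).1 :=
          (plast τ w₀ H).2.mem_of_provable hτ (Provable.proj X x hx)
        show (pval τ w₀ x H, x) = (pval τ w₀ x G, x)
        rw [hGdef, pval, if_pos hproj]
      have hsa : Sat (canon τ w₀) a (asn τ w₀ G) :=
        hsat (asn τ w₀ G) ⟨G, hvG, rfl⟩ hagree
      have : a ∈ Δ.1 := (ih G hvG).1 hsa
      exact Δ.2.not_both this hna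
    · intro hmem t ht hag
      obtain ⟨G, hG, rfl⟩ := ht
      have hagree : ∀ x ∈ X, pval τ w₀ x H = pval τ w₀ x G := by
        intro x hx
        have := hag x hx
        simp only [asn, Prod.mk.injEq] at this
        exact this.1
      have hrel := rel_of_agree hτ hH hG hagree
      exact (ih G hG).2 (hrel a hmem)
  | dep X y =>
    intro H hH
    show (∀ t ∈ (canon τ w₀).A, agree (↑X) (asn τ w₀ H) t → asn τ w₀ H y = t y) ↔ _
    constructor
    · intro hsat
      by_contra hmem
      set G : List (Finset V × Wld τ) := (X, plast τ w₀ H) :: H with hGdef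
      have hvG : PValid τ w₀ G := ⟨hH, rel_refl hτ X _⟩
      have hagree : agree (↑X) (asn τ w₀ H) (asn τ w₀ G) := by
        intro x hx
        have hproj : Formula.dep X x ∈ (plast τ w₀ H).1 :=
          (plast τ w₀ H).2.mem_of_provable hτ (Provable.proj X x hx)
        show (pval τ w₀ x H, x) = (pval τ w₀ x G, x)
        rw [hGdef, pval, if_pos hproj]
      have he := hsat (asn τ w₀ G) ⟨G, hvG, rfl⟩ hagree
      have he' : pval τ w₀ y H = pval τ w₀ y G := congrArg Prod.fst he
      have hG' : pval τ w₀ y G = G := by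
        rw [hGdef, pval, if_neg hmem]
      have hlen : (pval τ w₀ y H).length ≤ H.length := (pval_suffix y H).length_le
      rw [he', hG', hGdef] at hlen
      simp at hlen
    · intro hmem t ht hag
      obtain ⟨G, hG, rfl⟩ := ht
      have hagree : ∀ x ∈ X, pval τ w₀ x G = pval τ w₀ x H := by
        intro x hx
        have := hag x hx
        simp only [asn, Prod.mk.injEq] at this
        exact this.1.symm
      have hdS : Formula.dep X y ∈ (plast τ w₀ (pvalS τ w₀ X H)).1 :=
        rel_free hτ (rel_symm hτ (rel_pvalS hτ X H hH)) hmem subset_rfl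
      have e1 : pval τ w₀ y H = pval τ w₀ y (pvalS τ w₀ X H) :=
        pval_eq_of_dep hτ H hH hdS
      have eS : pvalS τ w₀ X G = pvalS τ w₀ X H := pvalS_congr hagree
      have hdS' : Formula.dep X y ∈ (plast τ w₀ (pvalS τ w₀ X G)).1 := by rw [eS]; exact hdS
      have e2 : pval τ w₀ y G = pval τ w₀ y (pvalS τ w₀ X G) :=
        pval_eq_of_dep hτ G hG hdS'
      show (pval τ w₀ y H, y) = (pval τ w₀ y G, y)
      rw [e1, e2, eS]

end LFD
open LFD

/-- Completeness: the Hilbert system **LFD** is sound and complete for dependence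
models: `φ` is provable iff `φ` is true at every admissible assignment of every
dependence model. -/
theorem stmt13 {V Pred : Type} [DecidableEq V] {ar : Pred → ℕ}
    (φ : Formula V Pred ar) :
    Provable φ ↔
      ∀ (O : Type) (M : DepModel V Pred ar O) (s : V → O), s ∈ M.A → Sat M φ s := by
  constructor
  · exact fun h => soundness h
  · intro h
    by_contra hnp
    set τ : Formula V Pred ar := impl φ φ with hτdef
    have hτ : Provable τ := pId φ
    have hcon : Con τ {Formula.neg φ} := by
      rintro ⟨L, hL, hp⟩
      have h1 : Provable (impl (Formula.neg φ) (conjL τ L)) := by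
        apply conjL_intro hτ
        intro ψ hψ
        have := hL ψ hψ
        rw [Set.mem_singleton_iff] at this
        rw [this]
        exact pId _
      exact hnp (pDNE (pContra h1 (pAdd _ hp)))
    obtain ⟨Δ, hsub, hmcs⟩ := lindenbaum hcon
    let w₀ : Wld τ := ⟨Δ, hmcs⟩
    have hmemA : asn τ w₀ [] ∈ (canon τ w₀).A := ⟨[], trivial, rfl⟩
    have hsat : Sat (canon τ w₀) φ (asn τ w₀ []) := h _ (canon τ w₀) _ hmemA
    have hmem : φ ∈ Δ := (truth_lemma hτ w₀ φ [] trivial).1 hsat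
    exact hmcs.not_both hmem (hsub rfl)
end

section
/- (Frame correspondence for Stepwise) Let V = {x, y, z} be a set of three distinct variables and assume the vocabulary contains at least one ternary predicate symbol. A dependence frame (O, A) (with A ⊆ (V → O)) makes the Stepwise axiom schema ◇_{X∩Y} φ → ◇_X ◇_Y φ true — i.e., every instance (for all X, Y ⊆ V and all LFD formulas φ) is true at every assignment in A under every interpretation of the predicate symbols — if and only if A is a full Cartesian product of the value ranges of the variables: for all s, t, u ∈ A there exists v ∈ A with v(x) = s(x), v(y) = t(y) and v(z) = u(z). -/
namespace LFD

variable {V Pred O : Type} {ar : Pred → ℕ}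

/-- The existential dependence modality `◇_X φ := ¬𝔻_X ¬φ`. -/
def diam (X : Finset V) (φ : Formula V Pred ar) : Formula V Pred ar :=
  Formula.neg (Formula.dd X (Formula.neg φ))

/-- Frame correspondence for the Stepwise axiom: over the set `V = {x, y, z}` of three
distinct variables (with at least one ternary predicate in the vocabulary), a dependence
frame `(O, A)` makes every instance of the Stepwise schema `◇_{X∩Y} φ → ◇_X ◇_Y φ` true
at every assignment under every interpretation of the predicate symbols iff `A` is a
full Cartesian product of the value ranges of the variables. -/
theorem stmt18 {V Pred : Type} [DecidableEq V] {ar : Pred → ℕ}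
    (x y z : V) (hxy : x ≠ y) (hxz : x ≠ z) (hyz : y ≠ z)
    (hV : ∀ v : V, v = x ∨ v = y ∨ v = z)
    (P₀ : Pred) (hP₀ : ar P₀ = 3)
    (O : Type) (A : Set (V → O)) :
    (∀ (I : (P : Pred) → Set (Fin (ar P) → O)) (X Y : Finset V)
        (φ : Formula V Pred ar), ∀ s ∈ A,
        Sat (⟨I, A⟩ : DepModel V Pred ar O)
          (impl (diam (X ∩ Y) φ) (diam X (diam Y φ))) s) ↔
    (∀ s ∈ A, ∀ t ∈ A, ∀ u ∈ A,
      ∃ v ∈ A, v x = s x ∧ v y = t y ∧ v z = u z) := by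
  classical
  constructor
  · intro h s hs t ht u hu
    -- Key lemma: stepwise validity gives pairwise merging along X, Y when X∩Y is disjoint-compatible
    have key : ∀ (X Y : Finset V) (p q : V → O), p ∈ A → q ∈ A →
        agree (↑(X ∩ Y)) p q → ∃ v ∈ A, agree (↑X) p v ∧ agree (↑Y) v q := by
      intro X Y p q hp hq hpq
      set I : (P : Pred) → Set (Fin (ar P) → O) :=
        fun P => {f | ∀ i : Fin (ar P),
          f i = q (if i.val = 0 then x else if i.val = 1 then y else z)} with hI
      set vfun : Fin (ar P₀) → V :=
        fun i => if i.val = 0 then x else if i.val = 1 then y else z with hvfun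
      set φ : Formula V Pred ar := Formula.atom P₀ vfun with hφ
      set M : DepModel V Pred ar O := ⟨I, A⟩ with hM
      have hsatφ : ∀ w : V → O, Sat M φ w ↔ (w x = q x ∧ w y = q y ∧ w z = q z) := by
        intro w
        simp only [hφ, Sat, hM, hI, Set.mem_setOf_eq, hvfun]
        constructor
        · intro hw
          refine ⟨?_, ?_, ?_⟩
          · have := hw ⟨0, by omega⟩; simpa using this
          · have := hw ⟨1, by omega⟩; simpa using this
          · have := hw ⟨2, by omega⟩; simpa using this
        · rintro ⟨h1, h2, h3⟩ i
          by_cases h0 : i.val = 0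
          · simp [h0, h1]
          · by_cases h1' : i.val = 1
            · simp [h0, h1', h2]
            · simp [h0, h1', h3]
      have hstep := h I X Y φ p hp
      simp only [impl, diam, Sat] at hstep
      have hdia : ¬ ∀ w ∈ A, agree (↑(X ∩ Y)) p w → ¬ Sat M φ w := by
        intro hall
        exact hall q hq hpq ((hsatφ q).2 ⟨rfl, rfl, rfl⟩)
      have hD2 : ¬ ∀ v ∈ A, agree (↑X) p v →
          ¬ ¬ ∀ w ∈ A, agree (↑Y) v w → ¬ Sat M φ w := by
        intro hc
        exact hstep ⟨hdia, fun h2 => h2 hc⟩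
      push_neg at hD2
      obtain ⟨v, hvA, hvX, w, hwA, hwY, hφw⟩ := hD2
      obtain ⟨e1, e2, e3⟩ := (hsatφ w).1 hφw
      have hwq : ∀ a : V, w a = q a := by
        intro a
        rcases hV a with h' | h' | h' <;> subst h' <;> assumption
      refine ⟨v, hvA, hvX, ?_⟩
      intro a ha
      rw [hwY a ha, hwq a]
    -- First merge s (on x) with t (on y,z)
    obtain ⟨w, hwA, hw1, hw2⟩ := key {x} {y, z} s t hs ht (by
      intro a ha
      simp only [Finset.coe_inter, Set.mem_inter_iff, Finset.mem_coe,
        Finset.mem_singleton, Finset.mem_insert] at ha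
      rcases ha with ⟨rfl, h' | h'⟩
      · exact absurd h' hxy
      · exact absurd h' hxz)
    -- Then merge w (on x,y) with u (on z)
    obtain ⟨v, hvA, hv1, hv2⟩ := key {x, y} {z} w u hwA hu (by
      intro a ha
      simp only [Finset.coe_inter, Set.mem_inter_iff, Finset.mem_coe,
        Finset.mem_singleton, Finset.mem_insert] at ha
      rcases ha with ⟨rfl | rfl, rfl⟩
      · exact absurd rfl hxz
      · exact absurd rfl hyz)
    have hsx : s x = w x := hw1 x (by simp)
    have hty : w y = t y := hw2 y (by simp)
    have hwx : w x = v x := hv1 x (by simp)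
    have hwy : w y = v y := hv1 y (by simp)
    have huz : v z = u z := hv2 z (by simp)
    exact ⟨v, hvA, (hsx.trans hwx).symm, hwy.symm.trans hty, huz⟩
  · intro hprod I X Y φ s hs
    set M : DepModel V Pred ar O := ⟨I, A⟩ with hM
    simp only [impl, diam, Sat]
    rintro ⟨h1, h2⟩
    apply h2
    push_neg at h1
    obtain ⟨w, hwA, hsw, hφw⟩ := h1
    set c : V → (V → O) := fun a => if a ∈ Y ∧ a ∉ X then w else s with hc
    have mem_c : ∀ a, c a ∈ A := by
      intro a; dsimp [c]; split
      · exact hwA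
      · exact hs
    obtain ⟨v, hvA, hvx, hvy, hvz⟩ := hprod (c x) (mem_c x) (c y) (mem_c y) (c z) (mem_c z)
    have hval : ∀ a : V, v a = c a a := by
      intro a
      rcases hV a with h' | h' | h' <;> subst h' <;> assumption
    have hagX : agree (↑X) s v := by
      intro a ha
      have h2' : c a a = s a := by
        dsimp [c]; rw [if_neg]; push_neg; intro _; exact ha
      rw [hval a, h2']
    have hagY : agree (↑Y) v w := by
      intro a ha
      rw [hval a]
      by_cases hX : a ∈ X
      · have h2' : c a a = s a := by
          dsimp [c]; rw [if_neg]; push_neg; intro _; exact hX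
        rw [h2']
        exact hsw a (Finset.mem_coe.mpr (Finset.mem_inter.mpr ⟨hX, ha⟩))
      · dsimp [c]; rw [if_pos ⟨ha, hX⟩]
    intro hall
    exact hall v hvA hagX (fun hall2 => hall2 w hwA hagY hφw)

end LFD
end
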